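/- arXiv:2205.07052 — 6 statements merged into one kernel-verified Lean document; each statement's English description precedes it below -/
import Mathlib

section
/- Product Singleton bound: if C and D are linear codes of length n over F_q, then the minimum distance of the star product code C ⋆ D satisfies d_{C⋆D} ≤ max{1, n − dim C − dim D + 2}. -/
def starSet {F : Type*} [Field F] {n : ℕ} (C D : Submodule F (Fin n → F)) :
    Set (Fin n → F) :=
  {v | ∃ c ∈ C, ∃ d ∈ D, v = fun i => c i * d i}

def starProd {F : Type*} [Field F] {n : ℕ} (C D : Submodule F (Fin n → F)) :
    Submodule F (Fin n → F) :=
  Submodule.span F (starSet C D)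

def wt {F : Type*} [Field F] [DecidableEq F] {n : ℕ} (v : Fin n → F) : ℕ :=
  (Finset.univ.filter fun i => v i ≠ 0).card

def IsMinDist {F : Type*} [Field F] [DecidableEq F] {n : ℕ}
    (C : Submodule F (Fin n → F)) (d : ℕ) : Prop :=
  (∃ v ∈ C, v ≠ 0 ∧ wt v = d) ∧ ∀ v ∈ C, v ≠ 0 → d ≤ wt v


open Module

section Aux

variable {F : Type*} [Field F] {n : ℕ}

/-- The submodule of vectors vanishing on a finite set of coordinates. -/
def kerOn (F : Type*) [Field F] {n : ℕ} (Z : Finset (Fin n)) :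
    Submodule F (Fin n → F) where
  carrier := {v | ∀ j ∈ Z, v j = 0}
  add_mem' := by intro a b ha hb j hj; simp [ha j hj, hb j hj]
  zero_mem' := by intro j hj; rfl
  smul_mem' := by intro r a ha j hj; simp [ha j hj]

lemma mem_kerOn {Z : Finset (Fin n)} {v : Fin n → F} :
    v ∈ kerOn F Z ↔ ∀ j ∈ Z, v j = 0 := Iff.rfl

lemma finrank_comap_subtype (E q : Submodule F (Fin n → F)) :
    Module.finrank F ↥(Submodule.comap E.subtype q) = Module.finrank F ↥(E ⊓ q) := by
  rw [← Submodule.map_comap_subtype]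
  exact (Submodule.equivMapOfInjective E.subtype (Submodule.injective_subtype E) _).finrank_eq

lemma finrank_le_shorten (C : Submodule F (Fin n → F)) (Z : Finset (Fin n)) :
    Module.finrank F ↥C ≤ Module.finrank F ↥(C ⊓ kerOn F Z) + Z.card := by
  classical
  set π : (Fin n → F) →ₗ[F] (↥Z → F) := LinearMap.funLeft F F (fun j : ↥Z => (j : Fin n)) with hπ
  have hker : LinearMap.ker π = kerOn F Z := by
    ext v
    constructor
    · intro h j hj
      exact congrFun h ⟨j, hj⟩
    · intro h
      funext j
      exact h j j.2
  have hrn := LinearMap.finrank_range_add_finrank_ker (π.domRestrict C)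
  have h1 : Module.finrank F ↥(LinearMap.range (π.domRestrict C)) ≤ Z.card := by
    have := Submodule.finrank_le (LinearMap.range (π.domRestrict C))
    simpa [finrank_pi, Fintype.card_coe] using this
  have h2 : Module.finrank F ↥(LinearMap.ker (π.domRestrict C))
      = Module.finrank F ↥(C ⊓ kerOn F Z) := by
    rw [LinearMap.ker_domRestrict, hker, finrank_comap_subtype]
  omega

lemma exists_ne_zero_vanishing (C : Submodule F (Fin n → F)) (Z : Finset (Fin n))
    (h : Z.card < Module.finrank F ↥C) :
    ∃ c ∈ C, c ≠ 0 ∧ ∀ j ∈ Z, c j = 0 := by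
  have hA := finrank_le_shorten C Z
  have hb : C ⊓ kerOn F Z ≠ ⊥ := by
    intro hb
    rw [hb, finrank_bot] at hA
    omega
  obtain ⟨c, hc, hc0⟩ := Submodule.exists_mem_ne_zero_of_ne_bot hb
  exact ⟨c, hc.1, hc0, hc.2⟩

lemma exists_indep_finset (E : Submodule F (Fin n → F)) :
    ∃ T : Finset (Fin n), T.card ≤ Module.finrank F ↥E ∧ E ⊓ kerOn F T = ⊥ := by
  classical
  generalize hm : Module.finrank F ↥E = m
  induction m generalizing E with
  | zero =>
    refine ⟨∅, by simp, ?_⟩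
    have : E = ⊥ := Submodule.finrank_eq_zero.mp hm
    simp [this]
  | succ m ih =>
    have hE : E ≠ ⊥ := by
      intro h
      rw [h, finrank_bot] at hm
      omega
    obtain ⟨d₀, hd₀E, hd₀⟩ := Submodule.exists_mem_ne_zero_of_ne_bot hE
    obtain ⟨t₁, ht₁⟩ : ∃ t, d₀ t ≠ 0 := by
      by_contra h
      push_neg at h
      exact hd₀ (funext h)
    have hrank : Module.finrank F ↥(E ⊓ kerOn F {t₁}) = m := by
      set f := (LinearMap.proj t₁ : (Fin n → F) →ₗ[F] F).domRestrict E with hf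
      have hker : Module.finrank F ↥(LinearMap.ker f)
          = Module.finrank F ↥(E ⊓ kerOn F {t₁}) := by
        have : LinearMap.ker (LinearMap.proj t₁ : (Fin n → F) →ₗ[F] F) = kerOn F {t₁} := by
          ext v
          simp [mem_kerOn]
        rw [hf, LinearMap.ker_domRestrict, this, finrank_comap_subtype]
      have hrange : LinearMap.range f = ⊤ := by
        rcases eq_bot_or_eq_top (LinearMap.range f) with h | h
        · exfalso
          have : f ⟨d₀, hd₀E⟩ = 0 := by
            have : f ⟨d₀, hd₀E⟩ ∈ LinearMap.range f := LinearMap.mem_range_self _ _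
            rw [h] at this
            exact (Submodule.mem_bot F).mp this
          exact ht₁ this
        · exact h
      have hrn := LinearMap.finrank_range_add_finrank_ker f
      rw [hrange] at hrn
      have htop : Module.finrank F ↥(⊤ : Submodule F F) = 1 := by
        simp [finrank_self]
      omega
    obtain ⟨T₁, hT₁card, hT₁⟩ := ih (E ⊓ kerOn F {t₁}) hrank
    refine ⟨insert t₁ T₁, ?_, ?_⟩
    · calc (insert t₁ T₁).card ≤ T₁.card + 1 := Finset.card_insert_le _ _
        _ ≤ m + 1 := by omega
    · rw [eq_bot_iff]
      rintro x ⟨hxE, hxk⟩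
      have hx1 : x ∈ (E ⊓ kerOn F {t₁}) ⊓ kerOn F T₁ := by
        refine ⟨⟨hxE, ?_⟩, ?_⟩
        · intro j hj
          exact hxk j (Finset.mem_insert.mpr (Or.inl (Finset.mem_singleton.mp hj)))
        · intro j hj
          exact hxk j (Finset.mem_insert_of_mem hj)
      rw [hT₁] at hx1
      exact hx1

lemma exists_systematic (E : Submodule F (Fin n → F)) :
    ∃ T : Finset (Fin n), T.card = Module.finrank F ↥E ∧
      ∀ t ∈ T, ∃ d ∈ E, d t = 1 ∧ ∀ s ∈ T, s ≠ t → d s = 0 := by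
  classical
  obtain ⟨T, hTle, hTbot⟩ := exists_indep_finset E
  set π : (Fin n → F) →ₗ[F] (↥T → F) := LinearMap.funLeft F F (fun j : ↥T => (j : Fin n)) with hπ
  set f := π.domRestrict E with hf
  have hker : LinearMap.ker f = ⊥ := by
    rw [eq_bot_iff]
    rintro ⟨x, hx⟩ hxk
    have hx0 : x ∈ E ⊓ kerOn F T := by
      refine ⟨hx, fun j hj => ?_⟩
      exact congrFun (show π x = 0 from hxk) ⟨j, hj⟩
    rw [hTbot] at hx0
    simpa using hx0
  have hrn := LinearMap.finrank_range_add_finrank_ker f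
  rw [hker, finrank_bot] at hrn
  have hle2 : Module.finrank F ↥(LinearMap.range f) ≤ T.card := by
    have := Submodule.finrank_le (LinearMap.range f)
    simpa [finrank_pi, Fintype.card_coe] using this
  have hcard : T.card = Module.finrank F ↥E := le_antisymm hTle (by omega)
  have hrange : LinearMap.range f = ⊤ := by
    apply Submodule.eq_top_of_finrank_eq
    rw [finrank_pi, Fintype.card_coe]
    omega
  refine ⟨T, hcard, fun t ht => ?_⟩
  obtain ⟨x, hxval⟩ := LinearMap.range_eq_top.mp hrange (Pi.single (⟨t, ht⟩ : ↥T) 1)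
  refine ⟨x.1, x.2, ?_, ?_⟩
  · have := congrFun hxval ⟨t, ht⟩
    simpa [hf, hπ] using this
  · intro s hs hst
    have := congrFun hxval ⟨s, hs⟩
    rw [Pi.single_eq_of_ne (by simpa [Subtype.ext_iff] using hst)] at this
    simpa [hf, hπ] using this

end Aux


/-- Product Singleton bound: if `C` and `D` are nonzero linear codes of length `n`,
then the minimum distance of `C ⋆ D` satisfies
`d_{C⋆D} ≤ max {1, n - dim C - dim D + 2}`. -/
theorem product_singleton_bound {F : Type*} [Field F] [Fintype F] [DecidableEq F] {n : ℕ}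
    (C D : Submodule F (Fin n → F)) (hC : C ≠ ⊥) (hD : D ≠ ⊥) (d : ℕ)
    (hd : IsMinDist (starProd C D) d) :
    (d : ℤ) ≤ max 1 ((n : ℤ) - Module.finrank F C - Module.finrank F D + 2) := by
  classical
  obtain ⟨⟨v₀, hv₀mem, hv₀ne, _⟩, hmin⟩ := hd
  set k := Module.finrank F ↥C with hk
  set l := Module.finrank F ↥D with hl
  set G : Finset (Fin n) := Finset.univ.filter (fun j => ∃ dd ∈ D, dd j ≠ 0) with hG
  -- there exists c ∈ C whose support meets G
  have hP0 : ∃ c ∈ C, ((Finset.univ.filter fun i => c i ≠ 0) ∩ G).Nonempty := by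
    by_contra h
    push_neg at h
    have hsub : starSet C D ⊆ {(0 : Fin n → F)} := by
      rintro v ⟨c, hc, dd, hdd, rfl⟩
      simp only [Set.mem_singleton_iff]
      by_contra hv
      obtain ⟨i, hi⟩ : ∃ i, c i * dd i ≠ 0 := by
        by_contra hi
        push_neg at hi
        exact hv (funext hi)
      have hci : c i ≠ 0 := fun h0 => hi (by simp [h0])
      have hdi : dd i ≠ 0 := fun h0 => hi (by simp [h0])
      have hmem : i ∈ (Finset.univ.filter fun i => c i ≠ 0) ∩ G := by
        refine Finset.mem_inter.mpr ⟨by simp [hci], ?_⟩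
        rw [hG]
        simp only [Finset.mem_filter, Finset.mem_univ, true_and]
        exact ⟨dd, hdd, hdi⟩
      exact (Finset.not_nonempty_iff_eq_empty.mpr (h c hc)) ⟨i, hmem⟩
    have hle : starProd C D ≤ ⊥ := by
      rw [starProd]
      apply Submodule.span_le.mpr
      intro v hv
      simpa using hsub hv
    exact hv₀ne (by simpa using hle hv₀mem)
  -- minimal weight (relative to G)
  set WS : Set ℕ :=
    {x | ∃ c, c ∈ C ∧ ((Finset.univ.filter fun i => c i ≠ 0) ∩ G).Nonempty ∧
      ((Finset.univ.filter fun i => c i ≠ 0) ∩ G).card = x} with hWS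
  have hWSne : WS.Nonempty := by
    obtain ⟨c, hc1, hc2⟩ := hP0
    exact ⟨_, c, hc1, hc2, rfl⟩
  set w := sInf WS with hwdef
  obtain ⟨c, hcC, hcne, hcw⟩ := Nat.sInf_mem hWSne
  have hwmin : ∀ c', c' ∈ C → ((Finset.univ.filter fun i => c' i ≠ 0) ∩ G).Nonempty →
      w ≤ ((Finset.univ.filter fun i => c' i ≠ 0) ∩ G).card :=
    fun c' h1 h2 => Nat.sInf_le ⟨c', h1, h2, rfl⟩
  set S := (Finset.univ.filter fun i => c i ≠ 0) ∩ G with hS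
  have hw : S.card = w := hcw
  have hwpos : 0 < w := hw ▸ Finset.card_pos.mpr hcne
  set m := Module.finrank F ↥(D ⊓ kerOn F S) with hm
  have hml : m < l := by
    obtain ⟨j, hjS⟩ := hcne
    have hjG : j ∈ G := (Finset.mem_inter.mp hjS).2
    obtain ⟨dd, hddD, hddj⟩ : ∃ dd ∈ D, dd j ≠ 0 := by
      rw [hG] at hjG
      simpa using hjG
    have hlt : D ⊓ kerOn F S < D := by
      refine lt_of_le_of_ne inf_le_left (fun hEq => hddj ?_)
      have : dd ∈ D ⊓ kerOn F S := by rw [hEq]; exact hddD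
      exact this.2 j hjS
    exact Submodule.finrank_lt_finrank_of_lt hlt
  have hlw : l ≤ m + w := by
    have := finrank_le_shorten D S
    omega
  by_cases hcase : (w : ℤ) ≤ (n : ℤ) - k - m + 1
  · -- low-weight case: produce a product word of weight ≤ n - k - l + 2
    obtain ⟨S', hS'sub, hS'card⟩ :=
      Finset.exists_subset_card_eq (show l - m - 1 ≤ S.card by omega)
    have hrk : m + 1 ≤ Module.finrank F ↥(D ⊓ kerOn F S') := by
      have := finrank_le_shorten D S'
      rw [hS'card] at this
      omega
    have hnotle : ¬ (D ⊓ kerOn F S' ≤ D ⊓ kerOn F S) := by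
      intro hle
      have := Submodule.finrank_mono hle
      omega
    obtain ⟨dd, hddmem, hddnot⟩ := SetLike.not_le_iff_exists.mp hnotle
    have hddD : dd ∈ D := hddmem.1
    have hddS' : ∀ j ∈ S', dd j = 0 := hddmem.2
    obtain ⟨j, hjS, hddj⟩ : ∃ j ∈ S, dd j ≠ 0 := by
      by_contra hcon
      push_neg at hcon
      exact hddnot ⟨hddD, hcon⟩
    set v : Fin n → F := fun i => c i * dd i with hv
    have hvmem : v ∈ starProd C D := Submodule.subset_span ⟨c, hcC, dd, hddD, rfl⟩
    have hcj : c j ≠ 0 := by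
      have := (Finset.mem_inter.mp hjS).1
      simpa using this
    have hvne : v ≠ 0 := by
      intro h0
      have := congrFun h0 j
      simp only [hv, Pi.zero_apply] at this
      exact hddj (by
        rcases mul_eq_zero.mp this with h | h
        · exact absurd h hcj
        · exact h)
    have hsupp : (Finset.univ.filter fun i => v i ≠ 0) ⊆ S \ S' := by
      intro i hi
      simp only [Finset.mem_filter, Finset.mem_univ, true_and] at hi
      have hci : c i ≠ 0 := fun h0 => hi (by simp [hv, h0])
      have hdi : dd i ≠ 0 := fun h0 => hi (by simp [hv, h0])
      have hiG : i ∈ G := by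
        rw [hG]
        simp only [Finset.mem_filter, Finset.mem_univ, true_and]
        exact ⟨dd, hddD, hdi⟩
      have hiS : i ∈ S := Finset.mem_inter.mpr ⟨by simp [hci], hiG⟩
      exact Finset.mem_sdiff.mpr ⟨hiS, fun hmem => hdi (hddS' i hmem)⟩
    have hwt : wt v ≤ w - (l - m - 1) := by
      have := Finset.card_le_card hsupp
      rw [Finset.card_sdiff_of_subset hS'sub, hS'card, hw] at this
      exact this
    have hdle : d ≤ wt v := hmin v hvmem hvne
    have hfin : (d : ℤ) ≤ (n : ℤ) - k - l + 2 := by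
      have hlm : l - m - 1 ≤ w := by omega
      omega
    exact le_trans hfin (le_max_right _ _)
  · -- high-weight case: produce a word of weight ≤ 1
    push_neg at hcase
    obtain ⟨T, hTcard, hTsys⟩ := exists_systematic (D ⊓ kerOn F S)
    rw [← hm] at hTcard
    have hTS : Disjoint S T := by
      rw [Finset.disjoint_right]
      intro t ht htS
      obtain ⟨dd, hddD₀, hdd1, _⟩ := hTsys t ht
      have : dd t = 0 := hddD₀.2 t htS
      rw [hdd1] at this
      exact one_ne_zero this
    obtain ⟨i₀, hi₀⟩ := hcne
    set Z : Finset (Fin n) := (Finset.univ \ (S ∪ T)) ∪ {i₀} with hZ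
    have hST : (S ∪ T).card = w + m := by
      rw [Finset.card_union_of_disjoint hTS, hw, hTcard]
    have hwmn : w + m ≤ n := by
      have := Finset.card_le_univ (S ∪ T)
      rw [hST] at this
      simpa using this
    have hZcard : Z.card ≤ n - (w + m) + 1 := by
      calc Z.card ≤ (Finset.univ \ (S ∪ T)).card + ({i₀} : Finset (Fin n)).card :=
            Finset.card_union_le _ _
        _ = n - (w + m) + 1 := by
            rw [Finset.card_sdiff_of_subset (Finset.subset_univ _), hST]
            simp
    have hZk : Z.card < k := by omega
    obtain ⟨c', hc'C, hc'ne, hc'Z⟩ := exists_ne_zero_vanishing C Z hZk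
    have hc'supp : ∀ i, c' i ≠ 0 → i ∈ S ∪ T ∧ i ≠ i₀ := by
      intro i hi
      constructor
      · by_contra hcon
        refine hi (hc'Z i ?_)
        rw [hZ]
        exact Finset.mem_union_left _ (Finset.mem_sdiff.mpr ⟨Finset.mem_univ _, hcon⟩)
      · rintro rfl
        refine hi (hc'Z i ?_)
        rw [hZ]
        exact Finset.mem_union_right _ (Finset.mem_singleton_self _)
    by_cases hT : ∃ t ∈ T, c' t ≠ 0
    · obtain ⟨t, htT, hct⟩ := hT
      obtain ⟨dd, hddD₀, hdd1, hddz⟩ := hTsys t htT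
      have hddD : dd ∈ D := hddD₀.1
      set v : Fin n → F := fun i => c' i * dd i with hv
      have hvmem : v ∈ starProd C D := Submodule.subset_span ⟨c', hc'C, dd, hddD, rfl⟩
      have hvt : v t ≠ 0 := by
        simp only [hv, hdd1, mul_one]
        exact hct
      have hvne : v ≠ 0 := fun h0 => hvt (by rw [h0]; rfl)
      have hsupp : (Finset.univ.filter fun i => v i ≠ 0) ⊆ {t} := by
        intro i hi
        simp only [Finset.mem_filter, Finset.mem_univ, true_and] at hi
        have hci : c' i ≠ 0 := fun h0 => hi (by simp [hv, h0])
        have hdi : dd i ≠ 0 := fun h0 => hi (by simp [hv, h0])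
        have hiST := (hc'supp i hci).1
        have hiS : i ∉ S := fun hmem => hdi (hddD₀.2 i hmem)
        have hiT : i ∈ T := by
          rcases Finset.mem_union.mp hiST with h | h
          · exact absurd h hiS
          · exact h
        by_contra hne
        rw [Finset.mem_singleton] at hne
        exact hdi (hddz i hiT hne)
      have hwt : wt v ≤ 1 := by
        have := Finset.card_le_card hsupp
        simpa [wt] using this
      have hdle : d ≤ wt v := hmin v hvmem hvne
      have : (d : ℤ) ≤ 1 := by omega
      exact le_trans this (le_max_left _ _)
    · push_neg at hT
      exfalso
      have hsub : (Finset.univ.filter fun i => c' i ≠ 0) ⊆ S.erase i₀ := by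
        intro i hi
        simp only [Finset.mem_filter, Finset.mem_univ, true_and] at hi
        have h1 := hc'supp i hi
        have hiS : i ∈ S := by
          rcases Finset.mem_union.mp h1.1 with h | h
          · exact h
          · exact absurd (hT i h) hi
        exact Finset.mem_erase.mpr ⟨h1.2, hiS⟩
      obtain ⟨i, hi⟩ : ∃ i, c' i ≠ 0 := by
        by_contra hcon
        push_neg at hcon
        exact hc'ne (funext hcon)
      have hiSe : i ∈ S.erase i₀ := hsub (by simp [hi])
      have hiG : i ∈ G :=
        (Finset.mem_inter.mp (Finset.mem_of_mem_erase hiSe)).2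
      have hne2 : ((Finset.univ.filter fun i => c' i ≠ 0) ∩ G).Nonempty :=
        ⟨i, Finset.mem_inter.mpr ⟨by simp [hi], hiG⟩⟩
      have h1 := hwmin c' hc'C hne2
      have h2 : ((Finset.univ.filter fun i => c' i ≠ 0) ∩ G).card ≤ w - 1 := by
        have hle' : ((Finset.univ.filter fun i => c' i ≠ 0) ∩ G) ⊆ S.erase i₀ :=
          fun x hx => hsub (Finset.mem_inter.mp hx).1
        have hle := Finset.card_le_card hle'
        rwa [Finset.card_erase_of_mem hi₀, hw] at hle
      omega
end

section
/- If C and D are full-support linear codes of length n over F_q and at least one of them is MDS, then dim(C ⋆ D) ≥ min{n, dim C + dim D − 1}. -/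
/-- A code is full-support if every coordinate is in the support of some codeword. -/
def FullSupport {F : Type*} [Field F] {n : ℕ} (C : Submodule F (Fin n → F)) : Prop :=
  ∀ i : Fin n, ∃ c ∈ C, c i ≠ 0

/-- A code is MDS if its minimum distance equals `n - dim C + 1`. -/
def IsMDS {F : Type*} [Field F] [DecidableEq F] {n : ℕ}
    (C : Submodule F (Fin n → F)) : Prop :=
  IsMinDist C (n - Module.finrank F C + 1)

set_option synthInstance.maxHeartbeats 1000000
set_option maxHeartbeats 1000000
set_option linter.unusedVariables false

open Module

section Aux
variable {F : Type*} [Field F] {n : ℕ}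

/-- Restriction of a code to a family of coordinates, as a linear map. -/
def restr (C : Submodule F (Fin n → F)) {ι : Type*} (q : ι → Fin n) : C →ₗ[F] (ι → F) where
  toFun c i := (c : Fin n → F) (q i)
  map_add' _ _ := rfl
  map_smul' _ _ := rfl

lemma coords : ∀ (r : ℕ) (W : Submodule F (Fin n → F)), Module.finrank F W = r →
    ∃ Q : Finset (Fin n), Q.card ≤ r ∧ ∀ w ∈ W, (∀ i ∈ Q, w i = 0) → w = 0 := by
  intro r
  induction r with
  | zero =>
    intro W hW
    refine ⟨∅, le_rfl, fun w hw _ => ?_⟩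
    have hbot : W = ⊥ := Submodule.finrank_eq_zero.mp hW
    simpa [hbot] using hw
  | succ r ih =>
    intro W hW
    have hne : W ≠ ⊥ := by
      intro h
      rw [h] at hW
      simp at hW
    obtain ⟨w₀, hw₀W, hw₀⟩ := Submodule.exists_mem_ne_zero_of_ne_bot hne
    obtain ⟨i₀, hi₀⟩ : ∃ i, w₀ i ≠ 0 := by
      by_contra h
      push_neg at h
      exact hw₀ (funext h)
    set f : W →ₗ[F] F := (LinearMap.proj i₀).comp W.subtype with hf
    have hfsurj : Function.Surjective f := by
      intro a
      refine ⟨(a / w₀ i₀) • ⟨w₀, hw₀W⟩, ?_⟩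
      simp [hf, div_mul_cancel₀ _ hi₀]
    have hrange : finrank F (LinearMap.range f) = 1 := by
      rw [LinearMap.range_eq_top.mpr hfsurj]
      simp
    have hker : finrank F (LinearMap.ker f) = r := by
      have := LinearMap.finrank_range_add_finrank_ker f
      omega
    set W' : Submodule F (Fin n → F) := (LinearMap.ker f).map W.subtype with hW'
    have hW'rank : finrank F W' = r := by
      rw [hW']
      rw [← hker]
      exact (Submodule.equivMapOfInjective W.subtype (Submodule.injective_subtype W)
        (LinearMap.ker f)).finrank_eq.symm
    obtain ⟨Q', hQ'card, hQ'⟩ := ih W' hW'rank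
    refine ⟨insert i₀ Q', (Finset.card_insert_le _ _).trans (by omega), ?_⟩
    intro w hwW hz
    have hwi₀ : w i₀ = 0 := hz i₀ (Finset.mem_insert_self _ _)
    have hwW' : w ∈ W' := by
      rw [hW']
      exact ⟨⟨w, hwW⟩, by simp [LinearMap.mem_ker, hf, hwi₀], rfl⟩
    exact hQ' w hwW' fun i hi => hz i (Finset.mem_insert_of_mem hi)
lemma echelon (D : Submodule F (Fin n → F)) :
    ∃ q : Fin (finrank F D) → Fin n, Function.Injective q ∧
      ∃ d : Fin (finrank F D) → (Fin n → F), (∀ j, d j ∈ D) ∧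
        ∀ i j, d j (q i) = if i = j then 1 else 0 := by
  set l := finrank F D with hl
  obtain ⟨Q, hQcard, hQ⟩ := coords l D rfl
  -- injectivity of restriction to Q
  have hinj : Function.Injective (restr D (fun i : ↥Q => (i : Fin n))) := by
    rw [← LinearMap.ker_eq_bot]
    rw [Submodule.eq_bot_iff]
    intro x hx
    have : (x : Fin n → F) = 0 :=
      hQ x x.2 fun i hi => congrFun hx ⟨i, hi⟩
    exact Subtype.ext this
  have hle : l ≤ Q.card := by
    have := LinearMap.finrank_le_finrank_of_injective hinj
    simpa using this
  have hQl : Q.card = l := le_antisymm hQcard hle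
  set q : Fin l → Fin n := fun j => (Q.orderIsoOfFin hQl j : Fin n) with hq
  have hqinj : Function.Injective q := fun a b hab => by
    have := (Q.orderIsoOfFin hQl).injective (Subtype.ext hab)
    exact this
  have hinj' : Function.Injective (restr D q) := by
    rw [← LinearMap.ker_eq_bot, Submodule.eq_bot_iff]
    intro x hx
    have : (x : Fin n → F) = 0 := by
      refine hQ x x.2 fun i hi => ?_
      obtain ⟨j, hj⟩ := (Q.orderIsoOfFin hQl).surjective ⟨i, hi⟩
      have hji : q j = i := by rw [hq]; exact congrArg Subtype.val hj
      have h3 := congrFun hx j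
      simpa [restr, hji] using h3
    exact Subtype.ext this
  have hfr : finrank F D = finrank F (Fin l → F) := by simp [hl]
  set e := LinearMap.linearEquivOfInjective (restr D q) hinj' hfr with he
  refine ⟨q, hqinj, fun j => (e.symm (Pi.single j 1) : D), fun j => (e.symm _).2, ?_⟩
  intro i j
  have : restr D q (e.symm (Pi.single j 1)) = Pi.single j 1 := by
    have h2 : e (e.symm (Pi.single j 1)) = Pi.single j 1 := e.apply_symm_apply _
    rwa [he, LinearMap.linearEquivOfInjective_apply] at h2
  have := congrFun this i
  simpa [restr, Pi.single_apply] using this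
lemma mds_exists [DecidableEq F] {C : Submodule F (Fin n → F)} (hC : IsMDS C)
    (Z : Finset (Fin n)) (hZ : Z.card ≤ finrank F C - 1) (p : Fin n) (hp : p ∉ Z) :
    ∃ c ∈ C, (∀ z ∈ Z, c z = 0) ∧ c p ≠ 0 := by
  set k := finrank F C with hk
  have hkpos : 0 < k := by
    obtain ⟨v, hvC, hv, -⟩ := hC.1
    rw [hk, Module.finrank_pos_iff_exists_ne_zero]
    exact ⟨⟨v, hvC⟩, fun h => hv (by simpa using congrArg Subtype.val h)⟩
  have hkn : k ≤ n := by
    have := Submodule.finrank_le C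
    simpa [← hk] using this
  -- extend Z to Z' of size k-1 avoiding p
  obtain ⟨Z', hZZ', hZ'sub, hZ'card⟩ :=
    Finset.exists_subsuperset_card_eq (t := Finset.univ.erase p)
      (fun x hx => Finset.mem_erase.mpr ⟨fun h => hp (h ▸ hx), Finset.mem_univ x⟩)
      hZ (by simp [Finset.card_erase_of_mem]; omega)
  have hpZ' : p ∉ Z' := fun h => (Finset.mem_erase.mp (hZ'sub h)).1 rfl
  -- kernel of restriction to Z'
  set f := restr C (fun i : ↥Z' => (i : Fin n)) with hf
  have hker : 0 < finrank F (LinearMap.ker f) := by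
    have h1 := LinearMap.finrank_range_add_finrank_ker f
    have h2 : finrank F (LinearMap.range f) ≤ Z'.card := by
      have := Submodule.finrank_le (LinearMap.range f)
      simpa using this
    rw [← hk] at h1
    omega
  have hnb : LinearMap.ker f ≠ ⊥ := by
    intro hb
    rw [hb] at hker
    simpa using hker
  obtain ⟨x, hxker, hxne⟩ := Submodule.exists_mem_ne_zero_of_ne_bot hnb
  set c : Fin n → F := (x : Fin n → F) with hc
  have hcC : c ∈ C := x.2
  have hcne : c ≠ 0 := by
    intro h
    exact hxne (Subtype.ext (by simpa [hc] using h))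
  have hfx : f x = 0 := LinearMap.mem_ker.mp hxker
  have hcz : ∀ z ∈ Z', c z = 0 := by
    intro z hz
    have := congrFun hfx ⟨z, hz⟩
    simpa [hf, restr] using this
  have hwt : n - k + 1 ≤ wt c := hC.2 c hcC hcne
  have hsub : Finset.univ.filter (fun i => c i ≠ 0) ⊆ Finset.univ \ Z' := by
    intro i hi
    simp only [Finset.mem_filter] at hi
    simp only [Finset.mem_sdiff, Finset.mem_univ, true_and]
    intro hiZ'
    exact hi.2 (hcz i hiZ')
  have hcard : (Finset.univ \ Z').card = n - k + 1 := by
    rw [Finset.card_sdiff_of_subset (Finset.subset_univ _)]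
    simp [hZ'card]
    omega
  have heq : Finset.univ.filter (fun i => c i ≠ 0) = Finset.univ \ Z' :=
    Finset.eq_of_subset_of_card_le hsub (by rw [hcard]; exact hwt)
  refine ⟨c, hcC, fun z hz => hcz z (hZZ' hz), ?_⟩
  have hpmem : p ∈ Finset.univ \ Z' := by simp [hpZ']
  rw [← heq] at hpmem
  exact (Finset.mem_filter.mp hpmem).2
lemma diag_indep {ι : Type*} [Fintype ι] [DecidableEq ι]
    (v : ι → Fin n → F) (π : ι → Fin n)
    (hdiag : ∀ j, v j (π j) ≠ 0) (hoff : ∀ i j, i ≠ j → v j (π i) = 0) :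
    LinearIndependent F v := by
  rw [Fintype.linearIndependent_iff]
  intro g hg i
  have h1 := congrFun hg (π i)
  simp only [Finset.sum_apply, Pi.smul_apply, smul_eq_mul, Pi.zero_apply] at h1
  rw [Finset.sum_eq_single i (fun b _ hb => by rw [hoff i b (Ne.symm hb), mul_zero])
    (fun h => absurd (Finset.mem_univ i) h)] at h1
  exact (mul_eq_zero.mp h1).resolve_right (hdiag i)

lemma main_aux [DecidableEq F]
    (C D : Submodule F (Fin n → F)) (hCfs : FullSupport C) (hDfs : FullSupport D)
    (hMDS : IsMDS C) :
    min n (finrank F C + finrank F D - 1) ≤ finrank F (starProd C D) := by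
  rcases Nat.eq_zero_or_pos n with hn | hn
  · subst hn; simp
  set k := finrank F C with hk
  set l := finrank F D with hl
  obtain ⟨q, hqinj, d, hdD, hdq⟩ := echelon D
  have hkpos : 0 < k := by
    obtain ⟨c, hcC, hcne⟩ := hCfs ⟨0, hn⟩
    rw [hk, Module.finrank_pos_iff_exists_ne_zero]
    exact ⟨⟨c, hcC⟩, fun h => hcne (by simpa using congrFun (congrArg Subtype.val h) ⟨0, hn⟩)⟩
  have hlpos : 0 < l := by
    obtain ⟨c, hcD, hcne⟩ := hDfs ⟨0, hn⟩
    rw [hl, Module.finrank_pos_iff_exists_ne_zero]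
    exact ⟨⟨c, hcD⟩, fun h => hcne (by simpa using congrFun (congrArg Subtype.val h) ⟨0, hn⟩)⟩
  have hkn : k ≤ n := by have := Submodule.finrank_le C; simpa [← hk] using this
  have hln : l ≤ n := by have := Submodule.finrank_le D; simpa [← hl] using this
  set t := min n (k + l - 1) with ht
  have htn : t ≤ n := by omega
  have htkl : t ≤ k + l - 1 := by omega
  set m := t - l with hm
  have hlt : l ≤ t := by omega
  have hmk : m ≤ k - 1 := by omega
  have hmtl : m + l = t := by omega
  -- choose fresh positions P disjoint from range of q
  set Qs : Finset (Fin n) := Finset.univ.image q with hQs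
  have hQscard : Qs.card = l := by
    rw [hQs, Finset.card_image_of_injective _ hqinj, Finset.card_univ, Fintype.card_fin]
  obtain ⟨P, hPsub, hPcard⟩ := Finset.exists_subset_card_eq (s := Qsᶜ) (n := m)
    (by rw [Finset.card_compl, hQscard, Fintype.card_fin]; omega)
  set p : Fin m → Fin n := fun i => (P.orderIsoOfFin hPcard i : Fin n) with hp
  have hpinj : Function.Injective p := fun a b hab =>
    (P.orderIsoOfFin hPcard).injective (Subtype.ext hab)
  have hpP : ∀ i, p i ∈ P := fun i => ((P.orderIsoOfFin hPcard) i).2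
  have hqP : ∀ j, q j ∉ P := by
    intro j hj
    have h1 := hPsub hj
    rw [Finset.mem_compl] at h1
    exact h1 (by rw [hQs]; exact Finset.mem_image_of_mem q (Finset.mem_univ j))
  -- codewords of C for the u-family
  have hu : ∀ j : Fin m, ∃ c, c ∈ C ∧ (∀ z ∈ P.erase (p j), c z = 0) ∧ c (p j) ≠ 0 := by
    intro j
    have h1 : (P.erase (p j)).card ≤ k - 1 := by
      rw [Finset.card_erase_of_mem (hpP j), hPcard]; omega
    obtain ⟨c, hc1, hc2, hc3⟩ := mds_exists hMDS _ h1 (p j) (Finset.notMem_erase _ _)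
    exact ⟨c, hc1, hc2, hc3⟩
  choose cu hcuC hcuz hcup using hu
  have hdu : ∀ j : Fin m, ∃ e, e ∈ D ∧ e (p j) ≠ 0 := by
    intro j; obtain ⟨e, he, hne⟩ := hDfs (p j); exact ⟨e, he, hne⟩
  choose du hduD hdup using hdu
  set u : Fin m → Fin n → F := fun j i => cu j i * du j i with huu
  -- codewords of C for the w-family
  have hw : ∀ j : Fin l, ∃ c, c ∈ C ∧ (∀ z ∈ P, c z = 0) ∧ c (q j) ≠ 0 := by
    intro j
    obtain ⟨c, hc1, hc2, hc3⟩ := mds_exists hMDS P (by rw [hPcard]; omega) (q j) (hqP j)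
    exact ⟨c, hc1, hc2, hc3⟩
  choose cw hcwC hcwz hcwq using hw
  set w : Fin l → Fin n → F := fun j i => cw j i * d j i with hww
  -- diagonal properties
  have hu_diag : ∀ j, u j (p j) ≠ 0 := fun j => mul_ne_zero (hcup j) (hdup j)
  have hu_off : ∀ i j : Fin m, i ≠ j → u j (p i) = 0 := by
    intro i j hij
    have : p i ∈ P.erase (p j) :=
      Finset.mem_erase.mpr ⟨fun h => hij (hpinj h), hpP i⟩
    simp [huu, hcuz j _ this]
  have hw_diag : ∀ j, w j (q j) ≠ 0 := by
    intro j
    have h1 : d j (q j) = 1 := by rw [hdq j j, if_pos rfl]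
    have : w j (q j) = cw j (q j) * 1 := by rw [hww, ← h1]
    rw [this, mul_one]
    exact hcwq j
  have hw_off : ∀ i j : Fin l, i ≠ j → w j (q i) = 0 := by
    intro i j hij
    have h1 : d j (q i) = 0 := by rw [hdq i j, if_neg hij]
    show cw j (q i) * d j (q i) = 0
    rw [h1, mul_zero]
  have hw_p : ∀ (i : Fin m) (j : Fin l), w j (p i) = 0 := by
    intro i j
    simp [hww, hcwz j _ (hpP i)]
  -- independence
  have hui : LinearIndependent F u := diag_indep u p hu_diag hu_off
  have hwi : LinearIndependent F w := diag_indep w q hw_diag hw_off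
  have hdisj : Disjoint (Submodule.span F (Set.range u)) (Submodule.span F (Set.range w)) := by
    rw [Submodule.disjoint_def]
    intro x hxu hxw
    obtain ⟨a, ha⟩ := (Submodule.mem_span_range_iff_exists_fun F).mp hxu
    obtain ⟨b, hb⟩ := (Submodule.mem_span_range_iff_exists_fun F).mp hxw
    have hxp : ∀ i : Fin m, x (p i) = 0 := by
      intro i
      rw [← hb]
      simp only [Finset.sum_apply, Pi.smul_apply, smul_eq_mul]
      exact Finset.sum_eq_zero fun j _ => by rw [hw_p i j, mul_zero]
    have ha0 : ∀ i, a i = 0 := by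
      intro i
      have h2 := congrFun ha (p i)
      simp only [Finset.sum_apply, Pi.smul_apply, smul_eq_mul] at h2
      rw [Finset.sum_eq_single i (fun b _ hb => by rw [hu_off i b (Ne.symm hb), mul_zero])
        (fun h => absurd (Finset.mem_univ i) h)] at h2
      rw [hxp i] at h2
      exact (mul_eq_zero.mp h2).resolve_right (hu_diag i)
    rw [← ha]
    simp [ha0]
  have hvind : LinearIndependent F (Sum.elim u w) := hui.sum_type hwi hdisj
  have hmem : ∀ s : Fin m ⊕ Fin l, Sum.elim u w s ∈ starProd C D := by
    rintro (j | j)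
    · exact Submodule.subset_span ⟨cu j, hcuC j, du j, hduD j, rfl⟩
    · exact Submodule.subset_span ⟨cw j, hcwC j, d j, hdD j, rfl⟩
  set v' : (Fin m ⊕ Fin l) → starProd C D := fun s => ⟨Sum.elim u w s, hmem s⟩ with hv'
  have hvind' : LinearIndependent F v' :=
    LinearIndependent.of_comp (starProd C D).subtype hvind
  have hcard := hvind'.fintype_card_le_finrank
  simp only [Fintype.card_sum, Fintype.card_fin] at hcard
  omega

lemma starSet_comm (C D : Submodule F (Fin n → F)) : starSet C D = starSet D C := by
  ext v
  constructor <;> rintro ⟨c, hc, d, hd, rfl⟩ <;>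
    exact ⟨d, hd, c, hc, funext fun i => mul_comm _ _⟩

end Aux

/-- If `C` and `D` are full-support codes of length `n` and at least one of them is MDS,
then `dim (C ⋆ D) ≥ min {n, dim C + dim D - 1}`. -/
theorem starProd_dim_bound_of_mds {F : Type*} [Field F] [Fintype F] [DecidableEq F] {n : ℕ}
    (C D : Submodule F (Fin n → F)) (hC : FullSupport C) (hD : FullSupport D)
    (hMDS : IsMDS C ∨ IsMDS D) :
    min n (Module.finrank F C + Module.finrank F D - 1) ≤
      Module.finrank F (starProd C D) := by
  rcases hMDS with h | h
  · exact main_aux C D hC hD h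
  · have h1 := main_aux D C hD hC h
    have h2 : starProd D C = starProd C D := by
      unfold starProd
      rw [starSet_comm]
    rw [h2] at h1
    omega
end

section
/- Information-set decodability: if a linear SDMM scheme is decodable from all N responses (i.e., AB = Σ_{i∈[N]} Λ_i ⊗ C̃_i for fixed matrices Λ_i) and I ⊆ [N] is an information set of the code C_A ⋆ C_B containing all response tuples, then there exist matrices Λ_i^I for i ∈ I with AB = Σ_{i∈I} Λ_i^I ⊗ C̃_i for all valid responses C̃. -/
open Kronecker

def matCode {F : Type*} [Field F] {n : ℕ} (t s : ℕ) (C : Submodule F (Fin n → F)) :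
    Submodule F (Fin n → Matrix (Fin t) (Fin s) F) where
  carrier := {X | ∀ (a : Fin t) (b : Fin s), (fun i => X i a b) ∈ C}
  add_mem' hx hy a b := by exact C.add_mem (hx a b) (hy a b)
  zero_mem' a b := by
    have : (fun i : Fin n => (0 : Matrix (Fin t) (Fin s) F) a b) = (0 : Fin n → F) := rfl
    exact this ▸ C.zero_mem
  smul_mem' r x hx a b := by exact C.smul_mem r (hx a b)

/-- Information-set decodability: if a linear SDMM scheme is decodable from all `N`
responses via fixed matrices `Λ i`, and `I` is an information set of the code
`C = C_A ⋆ C_B` (the projection of the code onto `I` is injective and `|I| = dim C`),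
then there exist matrices `Λ'` such that decoding succeeds using only the responses
indexed by `I`, for every valid response tuple in `Mat(C)`. -/
theorem information_set_decoding {F : Type*} [Field F] [Fintype F] {N m n t r : ℕ}
    (Ccode : Submodule F (Fin N → F)) (Λ : Fin N → Matrix (Fin m) (Fin n) F)
    (I : Finset (Fin N)) (hcard : I.card = Module.finrank F Ccode)
    (hinj : ∀ u ∈ Ccode, ∀ v ∈ Ccode, (∀ i ∈ I, u i = v i) → u = v) :
    ∃ Λ' : Fin N → Matrix (Fin m) (Fin n) F,
      ∀ Ct ∈ matCode t r Ccode,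
        ∑ i ∈ I, Λ' i ⊗ₖ Ct i = ∑ i : Fin N, Λ i ⊗ₖ Ct i := by
  classical
  let π : Ccode →ₗ[F] ({i // i ∈ I} → F) :=
    { toFun := fun u i => u.1 i.1
      map_add' := fun x y => rfl
      map_smul' := fun c x => rfl }
  have hker : LinearMap.ker π = ⊥ := by
    rw [LinearMap.ker_eq_bot']
    intro u hu
    exact Subtype.ext (hinj u.1 u.2 0 Ccode.zero_mem (fun i hi => congrFun hu ⟨i, hi⟩))
  obtain ⟨g, hg⟩ := LinearMap.exists_leftInverse_of_injective π hker
  set c : {i // i ∈ I} → Ccode := fun i => g (Pi.single i 1) with hc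
  have key : ∀ u : Ccode, ∀ j, u.1 j = ∑ i : {i // i ∈ I}, u.1 i.1 * (c i).1 j := by
    intro u j
    have h1 : π u = ∑ i : {i // i ∈ I}, u.1 i.1 • (Pi.single i 1 : {i // i ∈ I} → F) := by
      funext k
      simp [π, Finset.sum_apply, Pi.single_apply, eq_comm]
    have h2 : g (π u) = u := by
      have := congrArg (fun f : Ccode →ₗ[F] Ccode => f u) hg
      simpa using this
    have h3 : u = ∑ i : {i // i ∈ I}, u.1 i.1 • c i := by
      conv_lhs => rw [← h2, h1]
      rw [map_sum]
      exact Finset.sum_congr rfl fun i _ => by simp [hc]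
    have := congrArg (fun v : Ccode => v.1 j) h3
    simpa [Finset.sum_apply, smul_eq_mul, mul_comm] using this
  refine ⟨fun i => if h : i ∈ I then ∑ j : Fin N, (c ⟨i, h⟩).1 j • Λ j else 0, ?_⟩
  intro Ct hCt
  ext p q
  simp only [Matrix.sum_apply, Matrix.kroneckerMap_apply]
  calc ∑ i ∈ I, (if h : i ∈ I then ∑ j : Fin N, (c ⟨i, h⟩).1 j • Λ j else 0) p.1 q.1
          * Ct i p.2 q.2
      = ∑ i : {i // i ∈ I}, ∑ j : Fin N, (c i).1 j * Λ j p.1 q.1 * Ct i.1 p.2 q.2 := by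
        rw [← Finset.sum_attach I
          (fun i => (if h : i ∈ I then ∑ j : Fin N, (c ⟨i, h⟩).1 j • Λ j else 0) p.1 q.1
            * Ct i p.2 q.2)]
        refine Finset.sum_congr rfl fun i _ => ?_
        rw [dif_pos i.2]
        simp [Finset.sum_mul, Matrix.sum_apply]
    _ = ∑ j : Fin N, Λ j p.1 q.1 * ∑ i : {i // i ∈ I}, (c i).1 j * Ct i.1 p.2 q.2 := by
        rw [Finset.sum_comm]
        refine Finset.sum_congr rfl fun j _ => ?_
        rw [Finset.mul_sum]
        refine Finset.sum_congr rfl fun i _ => by ring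
    _ = ∑ i : Fin N, Λ i p.1 q.1 * Ct i p.2 q.2 := by
        refine Finset.sum_congr rfl fun j _ => ?_
        have := key ⟨fun k => Ct k p.2 q.2, hCt p.2 q.2⟩ j
        simp only [mul_comm] at this ⊢
        rw [← this]
end

section
/- If columns indexed by a set X of the X×N matrix F^sec (the generator of the security part) are linearly dependent while the corresponding columns of the full generator F are linearly independent, and A is uniformly distributed, then I(A; Ã_X) > 0, i.e., the scheme leaks information to the colluding set X. -/
open MeasureTheory ProbabilityTheory

/-- Leakage from a deficient security code: consider a linear SDMM encoding
`Ã = (A_1, …, A_M, R_1, …, R_X) · F` with generator rows `Fmat : Fin (M+X) → Fin N → F`,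
where the data blocks `A` and the random blocks `R` are independent and uniformly
distributed tuples of (nonempty) `a × b` matrices.  If, for a colluding set `𝒳`, the
columns of the security part `F^sec` (the last `X` rows) indexed by `𝒳` are linearly
dependent while the corresponding columns of the full generator `F` are linearly
independent, then `A` is *not* independent of `Ã_𝒳`, i.e. `I(A; Ã_𝒳) > 0`. -/
theorem leakage_of_dependent_security_columns {F : Type*} [Field F] [Fintype F]
    {M X N a b : ℕ} (ha : 0 < a) (hb : 0 < b)
    (Fmat : Fin (M + X) → Fin N → F) (𝒳 : Finset (Fin N))
    {Ω : Type*} [MeasurableSpace Ω] (μ : Measure Ω) [IsProbabilityMeasure μ]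
    [MeasurableSpace (Fin M → Matrix (Fin a) (Fin b) F)]
    [DiscreteMeasurableSpace (Fin M → Matrix (Fin a) (Fin b) F)]
    [MeasurableSpace (Fin X → Matrix (Fin a) (Fin b) F)]
    [DiscreteMeasurableSpace (Fin X → Matrix (Fin a) (Fin b) F)]
    [MeasurableSpace ({x // x ∈ 𝒳} → Matrix (Fin a) (Fin b) F)]
    [DiscreteMeasurableSpace ({x // x ∈ 𝒳} → Matrix (Fin a) (Fin b) F)]
    (A : Ω → (Fin M → Matrix (Fin a) (Fin b) F))
    (R : Ω → (Fin X → Matrix (Fin a) (Fin b) F))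
    (hA : Measurable A) (hR : Measurable R)
    (hAunif : μ.map A =
      (PMF.uniformOfFintype (Fin M → Matrix (Fin a) (Fin b) F)).toMeasure)
    (hRunif : μ.map R =
      (PMF.uniformOfFintype (Fin X → Matrix (Fin a) (Fin b) F)).toMeasure)
    (hAR : IndepFun A R μ)
    (hdep : ¬ LinearIndependent F
      (fun j : {x // x ∈ 𝒳} => fun k : Fin X => Fmat (Fin.natAdd M k) j))
    (hindcols : LinearIndependent F
      (fun j : {x // x ∈ 𝒳} => fun k : Fin (M + X) => Fmat k j)) :
    ¬ IndepFun A
        (fun ω => fun j : {x // x ∈ 𝒳} =>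
          ∑ k : Fin (M + X), Fmat k j • Fin.append (A ω) (R ω) k) μ := by
  classical
  letI : MeasurableSpace (Matrix (Fin a) (Fin b) F) := ⊤
  haveI : DiscreteMeasurableSpace (Matrix (Fin a) (Fin b) F) := ⟨fun _ => trivial⟩
  intro h
  -- extract a dependency vector c for the security columns
  obtain ⟨c, hc0, j0, hj0⟩ := Fintype.not_linearIndependent_iff.mp hdep
  set d : Fin (M + X) → F := fun k => ∑ j : {x // x ∈ 𝒳}, c j * Fmat k j with hd
  have hdsec : ∀ k : Fin X, d (Fin.natAdd M k) = 0 := by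
    intro k
    have := congrFun hc0 k
    simpa [hd, Finset.sum_apply, Pi.smul_apply, smul_eq_mul] using this
  have hex : ∃ i : Fin M, d (Fin.castAdd X i) ≠ 0 := by
    by_contra hno
    push_neg at hno
    have hzero : (∑ j : {x // x ∈ 𝒳}, c j • (fun k : Fin (M + X) => Fmat k j)) = 0 := by
      funext k
      have hk : d k = 0 := Fin.addCases hno hdsec k
      simpa [hd, Finset.sum_apply, Pi.smul_apply, smul_eq_mul] using hk
    exact hj0 (Fintype.linearIndependent_iff.mp hindcols c hzero j0)
  obtain ⟨i0, hi0⟩ := hex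
  set e : Fin M → F := fun i => d (Fin.castAdd X i) with he
  set Atil : Ω → ({x // x ∈ 𝒳} → Matrix (Fin a) (Fin b) F) :=
    fun ω => fun j : {x // x ∈ 𝒳} =>
      ∑ k : Fin (M + X), Fmat k j • Fin.append (A ω) (R ω) k with hAtil
  set g : ({x // x ∈ 𝒳} → Matrix (Fin a) (Fin b) F) → Matrix (Fin a) (Fin b) F :=
    fun y => ∑ j : {x // x ∈ 𝒳}, c j • y j with hg
  set L : (Fin M → Matrix (Fin a) (Fin b) F) → Matrix (Fin a) (Fin b) F :=
    fun v => ∑ i : Fin M, e i • v i with hL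
  -- the key cancellation identity
  have key : ∀ ω, g (Atil ω) = L (A ω) := by
    intro ω
    have h1 : g (Atil ω)
        = ∑ k : Fin (M + X), d k • Fin.append (A ω) (R ω) k := by
      simp only [hg, hAtil, Finset.smul_sum, smul_smul]
      rw [Finset.sum_comm]
      simp only [hd, Finset.sum_smul]
    rw [h1, Fin.sum_univ_add]
    simp [hdsec, Fin.append_left, Fin.append_right, hL, he]
  have hgm : Measurable g := Measurable.of_discrete
  have hLm : Measurable L := Measurable.of_discrete
  have h2 := h.comp hLm hgm
  set T : Ω → Matrix (Fin a) (Fin b) F := fun ω => L (A ω) with hT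
  have hTT : IndepFun T T μ := by
    have e2 : g ∘ Atil = T := funext key
    have e1 : L ∘ A = T := rfl
    rwa [e1, e2] at h2
  have hmeas0 : MeasurableSet ({(0 : Matrix (Fin a) (Fin b) F)} : Set (Matrix (Fin a) (Fin b) F)) :=
    MeasurableSpace.measurableSet_top
  have hself := hTT.measure_inter_preimage_eq_mul {0} {0} hmeas0 hmeas0
  rw [Set.inter_self] at hself
  set p : ENNReal := μ (T ⁻¹' {0}) with hp
  -- probability of any single value of A
  have hsingle : ∀ v : Fin M → Matrix (Fin a) (Fin b) F,
      μ (A ⁻¹' {v}) = (Fintype.card (Fin M → Matrix (Fin a) (Fin b) F) : ENNReal)⁻¹ := by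
    intro v
    rw [← Measure.map_apply hA MeasurableSet.of_discrete, hAunif,
      PMF.toMeasure_apply_singleton _ _ MeasurableSet.of_discrete,
      PMF.uniformOfFintype_apply]
  have hupos : (0 : ENNReal) < (Fintype.card (Fin M → Matrix (Fin a) (Fin b) F) : ENNReal)⁻¹ :=
    ENNReal.inv_pos.mpr (ENNReal.natCast_ne_top _)
  -- lower bound : p > 0
  have hppos : 0 < p := by
    have hsub : A ⁻¹' {(fun _ => 0 : Fin M → Matrix (Fin a) (Fin b) F)} ⊆ T ⁻¹' {0} := by
      intro ω hω
      have : A ω = fun _ => 0 := hω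
      simp [Set.mem_preimage, hT, hL, this]
    calc (0 : ENNReal) < _ := hupos
    _ = μ (A ⁻¹' {(fun _ => 0 : Fin M → Matrix (Fin a) (Fin b) F)}) := (hsingle _).symm
    _ ≤ p := measure_mono hsub
  -- a witness value of A where T is nonzero
  set A1 : Fin M → Matrix (Fin a) (Fin b) F :=
    Pi.single i0 (Matrix.of fun _ _ => (1 : F)) with hA1
  have hLA1 : L A1 ≠ 0 := by
    have hsum : L A1 = e i0 • Matrix.of fun _ _ => (1 : F) := by
      have hre : L A1 = ∑ i : Fin M, e i • A1 i := rfl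
      rw [hre, Finset.sum_eq_single i0]
      · simp [hA1]
      · intro i _ hi
        simp [hA1, Pi.single_eq_of_ne hi]
      · simp
    intro hc
    rw [hsum] at hc
    have := congrFun (congrFun hc ⟨0, ha⟩) ⟨0, hb⟩
    simp only [Matrix.smul_apply, Matrix.of_apply, smul_eq_mul, mul_one,
      Matrix.zero_apply] at this
    exact hi0 this
  have hplt : p < 1 := by
    have hsub : A ⁻¹' {A1} ⊆ (T ⁻¹' {0})ᶜ := by
      intro ω hω
      have hω' : A ω = A1 := hω
      simp only [Set.mem_compl_iff, Set.mem_preimage, Set.mem_singleton_iff, hT, hω']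
      exact hLA1
    have hmT : MeasurableSet (T ⁻¹' {0}) := (hLm.comp hA) hmeas0
    have hcompl : μ ((T ⁻¹' {0})ᶜ) = 1 - p := by
      rw [measure_compl hmT (measure_ne_top μ _), measure_univ]
    have hq : (Fintype.card (Fin M → Matrix (Fin a) (Fin b) F) : ENNReal)⁻¹ ≤ 1 - p := by
      rw [← hcompl, ← hsingle A1]
      exact measure_mono hsub
    have h1p : p ≤ 1 - (Fintype.card (Fin M → Matrix (Fin a) (Fin b) F) : ENNReal)⁻¹ := by
      have hple : p ≤ 1 := prob_le_one
      have := tsub_le_tsub_left hq (1 : ENNReal)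
      calc p = 1 - (1 - p) := by
              rw [ENNReal.sub_sub_cancel ENNReal.one_ne_top hple]
      _ ≤ 1 - (Fintype.card (Fin M → Matrix (Fin a) (Fin b) F) : ENNReal)⁻¹ := this
    exact lt_of_le_of_lt h1p
      (ENNReal.sub_lt_self ENNReal.one_ne_top one_ne_zero (ne_of_gt hupos))
  -- contradiction from p = p * p with 0 < p < 1
  have hfin : p ≠ 0 := ne_of_gt hppos
  have : p * p < 1 * p :=
    by have := ENNReal.mul_lt_mul_right hfin (ne_top_of_lt hplt) hplt; rwa [mul_comm (1 : ENNReal) p]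
  rw [one_mul, ← hself] at this
  exact lt_irrefl _ this
end

section
/- A decodable linear SDMM scheme cannot be secure against more than dim C_A^sec colluding workers: concretely, if the X×N matrix F^sec has row rank at most X−1 (so dim C_A^sec ≤ X−1), then the scheme is not X-secure. -/
open MeasureTheory ProbabilityTheory Kronecker

variable {F : Type*} [Field F] [Fintype F]

/-- Encoding of the `A`-side of a linear SDMM scheme: the data blocks `A` (indexed by the
grid `Fin m × Fin p`) and the random blocks `R` are encoded with the generator `Fmat`. -/
def encode {F : Type*} [Field F] {μdim : Type*} [Fintype μdim]
    {X N a b : ℕ} (Fmat : μdim ⊕ Fin X → Fin N → F)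
    (A : μdim → Matrix (Fin a) (Fin b) F) (R : Fin X → Matrix (Fin a) (Fin b) F) :
    Fin N → Matrix (Fin a) (Fin b) F :=
  fun ℓ => (∑ ij, Fmat (Sum.inl ij) ℓ • A ij) + ∑ k, Fmat (Sum.inr k) ℓ • R k

/-- `X`-security of a linear SDMM scheme: for every probability space, every distribution
of the data `(A, B)`, and independent uniform randomness `(R, S)`, the data is independent
of the encoded shares of any colluding set of at most `X` workers. -/
def XSecure {F : Type*} [Field F] [Fintype F] (m p n X N a b c : ℕ)
    (Fmat : (Fin m × Fin p) ⊕ Fin X → Fin N → F)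
    (Gmat : (Fin p × Fin n) ⊕ Fin X → Fin N → F) : Prop :=
  letI : MeasurableSpace (Matrix (Fin a) (Fin b) F) := ⊤
  letI : MeasurableSpace (Matrix (Fin b) (Fin c) F) := ⊤
  ∀ (Ω : Type) (_ : MeasurableSpace Ω) (μ : Measure Ω), IsProbabilityMeasure μ →
    ∀ (A : Ω → (Fin m × Fin p → Matrix (Fin a) (Fin b) F))
      (B : Ω → (Fin p × Fin n → Matrix (Fin b) (Fin c) F))
      (R : Ω → (Fin X → Matrix (Fin a) (Fin b) F))
      (S : Ω → (Fin X → Matrix (Fin b) (Fin c) F)),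
      Measurable A → Measurable B → Measurable R → Measurable S →
      μ.map (fun ω => (R ω, S ω)) =
        (PMF.uniformOfFintype
          ((Fin X → Matrix (Fin a) (Fin b) F) × (Fin X → Matrix (Fin b) (Fin c) F))).toMeasure →
      IndepFun (fun ω => (A ω, B ω)) (fun ω => (R ω, S ω)) μ →
      ∀ 𝒳 : Finset (Fin N), 𝒳.card ≤ X →
        IndepFun (fun ω => (A ω, B ω))
          (fun ω => fun j : {x // x ∈ 𝒳} =>
            (encode Fmat (A ω) (R ω) j, encode Gmat (B ω) (S ω) j)) μ


lemma aux_exists_w {F : Type*} [Field F] {X N : ℕ}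
    (g : Fin X → (Fin N → F)) (v : Fin N → F)
    (hv : v ∉ Submodule.span F (Set.range g))
    (hdep : ¬ LinearIndependent F g) :
    ∃ (𝒳 : Finset (Fin N)) (w : Fin N → F), 𝒳.card ≤ X ∧ (∀ ℓ ∉ 𝒳, w ℓ = 0) ∧
      (∀ k, ∑ ℓ, w ℓ * g k ℓ = 0) ∧ (∑ ℓ, w ℓ * v ℓ = 1) := by
  classical
  set c : Fin N → ((Fin X → F) × F) := fun ℓ => (fun k => g k ℓ, v ℓ) with hc
  set e : (Fin X → F) × F := (0, 1) with he
  have hdecomp : ∀ ℓ, c ℓ =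
      (∑ k, g k ℓ • ((Pi.single k 1 : Fin X → F), (0:F))) + v ℓ • e := by
    intro ℓ
    refine Prod.ext ?_ ?_
    · funext k'
      simp [c, e, Prod.fst_sum, Finset.sum_apply, Pi.single_apply, mul_ite,
        Finset.sum_ite_eq', hc]
    · simp [c, e, Prod.snd_sum]
  -- Step A : e ∈ span of the columns
  have hespan : e ∈ Submodule.span F (Set.range c) := by
    by_contra hne
    set Q := Submodule.span F (Set.range c) with hQ
    have hq : Q.mkQ e ≠ 0 := by
      simpa [Submodule.mkQ_apply, Submodule.Quotient.mk_eq_zero] using hne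
    obtain ⟨φ, hφ⟩ : ∃ φ : Module.Dual F (((Fin X → F) × F) ⧸ Q), φ (Q.mkQ e) ≠ 0 := by
      by_contra h
      push_neg at h
      exact hq ((Module.forall_dual_apply_eq_zero_iff F _).mp h)
    set ψ : ((Fin X → F) × F) →ₗ[F] F := φ.comp Q.mkQ with hψdef
    have hψc : ∀ ℓ, ψ (c ℓ) = 0 := by
      intro ℓ
      have h0 : Q.mkQ (c ℓ) = 0 := by
        rw [Submodule.mkQ_apply, Submodule.Quotient.mk_eq_zero]
        exact Submodule.subset_span ⟨ℓ, rfl⟩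
      simp [hψdef, h0]
    have hψe : ψ e ≠ 0 := hφ
    have hψsmul : ∀ (t : F) (x : Fin X → F), ψ (t • x, (0:F)) = t * ψ (x, 0) := by
      intro t x
      have hx : ((t • x, (0:F)) : (Fin X → F) × F) = t • (x, (0:F)) := by simp
      rw [hx, _root_.map_smul, smul_eq_mul]
    have hkey : ∀ ℓ, (∑ k, g k ℓ * ψ (Pi.single k 1, (0:F))) + v ℓ * ψ e = 0 := by
      intro ℓ
      have h := hψc ℓ
      rw [hdecomp ℓ] at h
      rw [map_add, map_sum, _root_.map_smul, smul_eq_mul] at h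
      simpa [hψsmul] using h
    apply hv
    rw [Submodule.mem_span_range_iff_exists_fun]
    refine ⟨fun k => -(ψ e)⁻¹ * ψ (Pi.single k 1, (0:F)), ?_⟩
    funext ℓ
    have h1 := hkey ℓ
    have h2 : v ℓ * ψ e = -∑ k, g k ℓ * ψ (Pi.single k 1, (0:F)) :=
      by linear_combination h1
    have h3 : v ℓ = (-∑ k, g k ℓ * ψ (Pi.single k 1, (0:F))) * (ψ e)⁻¹ := by
      field_simp at h2 ⊢
      linear_combination h2
    rw [Finset.sum_apply]
    rw [h3]
    rw [neg_mul, Finset.sum_mul]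
    rw [← Finset.sum_neg_distrib]
    refine Finset.sum_congr rfl fun k _ => ?_
    simp [Pi.smul_apply, smul_eq_mul]
    ring
  -- Step B : minimal support representation
  have hex : ∃ w : Fin N → F, ∑ ℓ, w ℓ • c ℓ = e :=
    (Submodule.mem_span_range_iff_exists_fun F).mp hespan
  set P : ℕ → Prop := fun nn => ∃ w : Fin N → F,
      (∑ ℓ, w ℓ • c ℓ = e) ∧ (Finset.univ.filter fun ℓ => w ℓ ≠ 0).card = nn with hP
  have hPne : {nn | P nn}.Nonempty := ⟨_, hex.choose, hex.choose_spec, rfl⟩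
  obtain ⟨w, hwsum, hwcard⟩ : P (sInf {nn | P nn}) := Nat.sInf_mem hPne
  set s : Finset (Fin N) := Finset.univ.filter fun ℓ => w ℓ ≠ 0 with hsdef
  -- the columns indexed by the support are linearly independent
  have hindep : LinearIndependent F (fun i : {x // x ∈ s} => c i.1) := by
    by_contra hdep2
    obtain ⟨u, husum, i₀, hu₀⟩ := Fintype.not_linearIndependent_iff.mp hdep2
    set t : F := w i₀.1 / u i₀ with ht
    set uu : Fin N → F := fun ℓ => if h : ℓ ∈ s then u ⟨ℓ, h⟩ else 0 with huu
    have huusum : ∑ ℓ, uu ℓ • c ℓ = 0 := by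
      have h1 : ∑ ℓ ∈ s, uu ℓ • c ℓ = ∑ ℓ, uu ℓ • c ℓ :=
        Finset.sum_subset (Finset.subset_univ _)
          (fun ℓ _ hℓ => by simp [huu, dif_neg hℓ])
      rw [← h1]
      rw [← Finset.sum_coe_sort s (fun ℓ => uu ℓ • c ℓ)]
      rw [← husum]
      refine Finset.sum_congr rfl fun i _ => ?_
      simp [huu, dif_pos i.2]
    set w' : Fin N → F := fun ℓ => w ℓ - t * uu ℓ with hw'
    have hw'sum : ∑ ℓ, w' ℓ • c ℓ = e := by
      simp only [hw', sub_smul, Finset.sum_sub_distrib, hwsum, mul_smul]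
      rw [← Finset.smul_sum, huusum, smul_zero, sub_zero]
    have hmem : i₀.1 ∈ s := i₀.2
    have hw'sub : (Finset.univ.filter fun ℓ => w' ℓ ≠ 0) ⊆ s.erase i₀.1 := by
      intro ℓ hℓ
      rw [Finset.mem_filter] at hℓ
      have hℓ' := hℓ.2
      by_cases hls : ℓ ∈ s
      · refine Finset.mem_erase.mpr ⟨?_, hls⟩
        rintro rfl
        apply hℓ'
        have hsub : (⟨(i₀ : Fin N), hls⟩ : {x // x ∈ s}) = i₀ := Subtype.ext rfl
        have huuℓ : uu (i₀ : Fin N) = u i₀ := by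
          rw [huu]
          simp only [dif_pos hls, hsub]
        show w (i₀ : Fin N) - t * uu (i₀ : Fin N) = 0
        rw [huuℓ, ht, div_mul_cancel₀ _ hu₀, sub_self]
      · exfalso
        apply hℓ'
        have : w ℓ = 0 := by
          by_contra hne
          exact hls (Finset.mem_filter.mpr ⟨Finset.mem_univ _, hne⟩)
        simp [hw', this, huu, dif_neg hls]
    have hlt : (Finset.univ.filter fun ℓ => w' ℓ ≠ 0).card < s.card := by
      calc (Finset.univ.filter fun ℓ => w' ℓ ≠ 0).card
          ≤ (s.erase i₀.1).card := Finset.card_le_card hw'sub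
        _ < s.card := Finset.card_erase_lt_of_mem hmem
    have : sInf {nn | P nn} ≤ (Finset.univ.filter fun ℓ => w' ℓ ≠ 0).card :=
      Nat.sInf_le ⟨w', hw'sum, rfl⟩
    omega
  -- Step C : bound the support size by X
  obtain ⟨lam, hlam, k₀, hk₀⟩ := Fintype.not_linearIndependent_iff.mp hdep
  set ψ : ((Fin X → F) × F) →ₗ[F] F :=
    ∑ k, lam k • ((LinearMap.proj k).comp (LinearMap.fst F (Fin X → F) F)) with hψdef
  have hψ : ∀ x : (Fin X → F) × F, ψ x = ∑ k, lam k * x.1 k := by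
    intro x
    simp [hψdef, LinearMap.sum_apply, LinearMap.smul_apply, smul_eq_mul]
  have hcker : ∀ ℓ, c ℓ ∈ LinearMap.ker ψ := by
    intro ℓ
    rw [LinearMap.mem_ker, hψ]
    have h := congrFun hlam ℓ
    simpa [Finset.sum_apply, smul_eq_mul] using h
  have hsurj : Function.Surjective ψ := by
    intro y
    refine ⟨(Pi.single k₀ ((lam k₀)⁻¹ * y), 0), ?_⟩
    rw [hψ]
    simp only [Pi.single_apply, mul_ite, mul_zero]
    rw [Finset.sum_ite_eq' Finset.univ k₀ (fun k => lam k * ((lam k₀)⁻¹ * y))]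
    simp [hk₀]
  have hker : Module.finrank F (LinearMap.ker ψ) = X := by
    have h1 := LinearMap.finrank_range_add_finrank_ker ψ
    rw [LinearMap.range_eq_top.mpr hsurj, finrank_top, Module.finrank_self,
      Module.finrank_prod, Module.finrank_pi, Fintype.card_fin,
      Module.finrank_self] at h1
    omega
  have hcardX : s.card ≤ X := by
    have h2 : LinearIndependent F
        (fun i : {x // x ∈ s} => (⟨c i.1, hcker i.1⟩ : LinearMap.ker ψ)) := by
      apply LinearIndependent.of_comp (LinearMap.ker ψ).subtype
      exact hindep
    have h3 := h2.fintype_card_le_finrank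
    rw [hker] at h3
    simpa [Fintype.card_coe] using h3
  -- conclude
  refine ⟨s, w, hcardX, ?_, ?_, ?_⟩
  · intro ℓ hℓ
    by_contra hne
    exact hℓ (Finset.mem_filter.mpr ⟨Finset.mem_univ _, hne⟩)
  · intro k
    have h1 := congrArg Prod.fst hwsum
    rw [Prod.fst_sum] at h1
    have h2 := congrFun h1 k
    rw [Finset.sum_apply] at h2
    simpa [c, e, smul_eq_mul] using h2
  · have h1 := congrArg Prod.snd hwsum
    rw [Prod.snd_sum] at h1
    simpa [c, e, smul_eq_mul] using h1


lemma aux_pmf_map_equiv {α β : Type*} [Fintype α] [Nonempty α] [Fintype β] [Nonempty β]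
    (e : α ≃ β) : (PMF.uniformOfFintype α).map e = PMF.uniformOfFintype β := by
  ext b
  rw [PMF.map_apply]
  rw [tsum_eq_single (e.symm b) (fun a ha => by
    rw [if_neg]
    intro hb
    exact ha (by rw [hb, Equiv.symm_apply_apply]))]
  rw [if_pos (by simp), PMF.uniformOfFintype_apply, PMF.uniformOfFintype_apply,
    Fintype.card_congr e]

lemma aux_row_not_in_span {F : Type*} [Field F] {m p n X N a b c : ℕ}
    (ha : 0 < a) (hb : 0 < b) (hc : 0 < c) (hm : 0 < m) (hn : 0 < n) (hp : 0 < p)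
    (Fmat : (Fin m × Fin p) ⊕ Fin X → Fin N → F)
    (Gmat : (Fin p × Fin n) ⊕ Fin X → Fin N → F)
    (hdec : ∃ Λ : Fin N → Matrix (Fin m) (Fin n) F,
      ∀ (A : Fin m × Fin p → Matrix (Fin a) (Fin b) F)
        (B : Fin p × Fin n → Matrix (Fin b) (Fin c) F)
        (R : Fin X → Matrix (Fin a) (Fin b) F)
        (S : Fin X → Matrix (Fin b) (Fin c) F),
        (fun (x : Fin m × Fin a) (y : Fin n × Fin c) =>
            (∑ j : Fin p, A (x.1, j) * B (j, y.1)) x.2 y.2) =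
          ∑ ℓ : Fin N, Λ ℓ ⊗ₖ (encode Fmat A R ℓ * encode Gmat B S ℓ)) :
    ∃ ij : Fin m × Fin p, (fun ℓ => Fmat (Sum.inl ij) ℓ) ∉
      Submodule.span F (Set.range fun k : Fin X => fun ℓ : Fin N => Fmat (Sum.inr k) ℓ) := by
  classical
  by_contra hno
  push_neg at hno
  choose cf hcf using fun ij => (Submodule.mem_span_range_iff_exists_fun F).mp (hno ij)
  obtain ⟨Λ, hΛ⟩ := hdec
  set EA : Matrix (Fin a) (Fin b) F := Matrix.single ⟨0,ha⟩ ⟨0,hb⟩ 1 with hEA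
  set EB : Matrix (Fin b) (Fin c) F := Matrix.single ⟨0,hb⟩ ⟨0,hc⟩ 1 with hEB
  set Astar : Fin m × Fin p → Matrix (Fin a) (Fin b) F :=
    fun ij => if ij.2 = ⟨0,hp⟩ then EA else 0 with hAstar
  set Rstar : Fin X → Matrix (Fin a) (Fin b) F :=
    fun k => -∑ ij, cf ij k • Astar ij with hRstar
  have h1 : ∀ ij ℓ, Fmat (Sum.inl ij) ℓ = ∑ k, cf ij k * Fmat (Sum.inr k) ℓ := by
    intro ij ℓ
    have := congrFun (hcf ij) ℓ
    simpa [Finset.sum_apply, smul_eq_mul] using this.symm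
  have henc : ∀ ℓ, encode Fmat Astar Rstar ℓ = 0 := by
    intro ℓ
    show (∑ ij, Fmat (Sum.inl ij) ℓ • Astar ij) + ∑ k, Fmat (Sum.inr k) ℓ • Rstar k = 0
    have h2 : ∑ k, Fmat (Sum.inr k) ℓ • Rstar k
        = -∑ ij, Fmat (Sum.inl ij) ℓ • Astar ij := by
      simp only [hRstar, smul_neg, Finset.smul_sum, smul_smul]
      rw [Finset.sum_neg_distrib, Finset.sum_comm, neg_inj]
      refine Finset.sum_congr rfl fun ij _ => ?_
      rw [← Finset.sum_smul]
      congr 1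
      rw [h1 ij ℓ]
      exact Finset.sum_congr rfl fun k _ => mul_comm _ _
    rw [h2, add_neg_cancel]
  have happ := congrFun (congrFun (hΛ Astar (fun _ => EB) Rstar 0)
      ((⟨0,hm⟩ : Fin m), (⟨0,ha⟩ : Fin a))) ((⟨0,hn⟩ : Fin n), (⟨0,hc⟩ : Fin c))
  simp only [henc, Matrix.zero_mul, Matrix.kronecker_zero, Finset.sum_const_zero,
    Matrix.zero_apply] at happ
  -- now LHS = 0
  rw [Matrix.sum_apply] at happ
  simp only [hAstar] at happ
  have hterm : ∀ x : Fin p, ((if x = ⟨0,hp⟩ then EA else 0) * EB) ⟨0,ha⟩ ⟨0,hc⟩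
      = if x = ⟨0,hp⟩ then (EA * EB) ⟨0,ha⟩ ⟨0,hc⟩ else 0 := by
    intro x
    split <;> simp
  rw [Finset.sum_congr rfl (fun x _ => hterm x)] at happ
  rw [Finset.sum_ite_eq' Finset.univ (⟨0,hp⟩ : Fin p)
    (fun _ => (EA * EB) ⟨0,ha⟩ ⟨0,hc⟩)] at happ
  have hone : (Matrix.single (⟨0,ha⟩ : Fin a) (⟨0,hb⟩ : Fin b) (1:F) *
      Matrix.single (⟨0,hb⟩ : Fin b) (⟨0,hc⟩ : Fin c) (1:F))
      (⟨0,ha⟩ : Fin a) (⟨0,hc⟩ : Fin c) = 1 := by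
    simp [Matrix.mul_apply, Matrix.single]
  rw [if_pos (Finset.mem_univ _), hEA, hEB, hone] at happ
  exact one_ne_zero happ

/-- A decodable linear SDMM scheme whose security generator `F^sec` has row rank at most
`X - 1` (i.e. the last `X` rows of `F` are linearly dependent, so `dim C_A^sec ≤ X - 1`)
is not `X`-secure. -/
theorem not_X_secure_of_rank_deficient_security {F : Type*} [Field F] [Fintype F]
    {m p n X N a b c : ℕ} (ha : 0 < a) (hb : 0 < b) (hc : 0 < c)
    (hm : 0 < m) (hn : 0 < n) (hp : 0 < p)
    (Fmat : (Fin m × Fin p) ⊕ Fin X → Fin N → F)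
    (Gmat : (Fin p × Fin n) ⊕ Fin X → Fin N → F)
    (hdec : ∃ Λ : Fin N → Matrix (Fin m) (Fin n) F,
      ∀ (A : Fin m × Fin p → Matrix (Fin a) (Fin b) F)
        (B : Fin p × Fin n → Matrix (Fin b) (Fin c) F)
        (R : Fin X → Matrix (Fin a) (Fin b) F)
        (S : Fin X → Matrix (Fin b) (Fin c) F),
        (fun (x : Fin m × Fin a) (y : Fin n × Fin c) =>
            (∑ j : Fin p, A (x.1, j) * B (j, y.1)) x.2 y.2) =
          ∑ ℓ : Fin N, Λ ℓ ⊗ₖ (encode Fmat A R ℓ * encode Gmat B S ℓ))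
    (hrank : ¬ LinearIndependent F (fun k : Fin X => fun ℓ : Fin N => Fmat (Sum.inr k) ℓ)) :
    ¬ XSecure m p n X N a b c Fmat Gmat := by
  classical
  intro hsec
  obtain ⟨ij0, hij0⟩ := aux_row_not_in_span ha hb hc hm hn hp Fmat Gmat hdec
  obtain ⟨𝒳, w, h𝒳X, hw0, hwg, hwv0⟩ :=
    aux_exists_w (fun k : Fin X => fun ℓ : Fin N => Fmat (Sum.inr k) ℓ)
      (fun ℓ => Fmat (Sum.inl ij0) ℓ) hij0 hrank
  have hwv : ∑ ℓ, w ℓ * Fmat (Sum.inl ij0) ℓ = 1 := by simpa using hwv0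
  letI mMA : MeasurableSpace (Matrix (Fin a) (Fin b) F) := ⊤
  letI mMB : MeasurableSpace (Matrix (Fin b) (Fin c) F) := ⊤
  haveI : MeasurableSingletonClass (Matrix (Fin a) (Fin b) F) :=
    ⟨fun _ => MeasurableSpace.measurableSet_top⟩
  haveI : MeasurableSingletonClass (Matrix (Fin b) (Fin c) F) :=
    ⟨fun _ => MeasurableSpace.measurableSet_top⟩
  set a0 : Fin a := ⟨0, ha⟩ with ha0
  set b0 : Fin b := ⟨0, hb⟩ with hb0
  set EA : Matrix (Fin a) (Fin b) F := Matrix.single a0 b0 1 with hEA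
  set Apt : Fin m × Fin p → Matrix (Fin a) (Fin b) F :=
    fun ij => if ij = ij0 then EA else 0 with hApt
  set P := (Fin X → Matrix (Fin a) (Fin b) F) × (Fin X → Matrix (Fin b) (Fin c) F)
    with hPdef
  set K : ℕ := Fintype.card P with hK
  set eP : P ≃ Fin K := Fintype.equivFin P with heP
  haveI : Nonempty (Fin K) := ⟨eP (Classical.arbitrary P)⟩
  set Ω : Type := Bool × Fin K with hΩ
  letI mΩ : MeasurableSpace Ω := inferInstance
  set μB : Measure Bool := (PMF.uniformOfFintype Bool).toMeasure with hμB
  set μK : Measure (Fin K) := (PMF.uniformOfFintype (Fin K)).toMeasure with hμK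
  set μ : Measure Ω := μB.prod μK with hμ
  haveI : IsProbabilityMeasure μB := PMF.toMeasure.isProbabilityMeasure _
  haveI : IsProbabilityMeasure μK := PMF.toMeasure.isProbabilityMeasure _
  haveI hμprob : IsProbabilityMeasure μ := by rw [hμ]; infer_instance
  set A : Ω → (Fin m × Fin p → Matrix (Fin a) (Fin b) F) :=
    fun ω => if ω.1 then Apt else 0 with hA
  set B : Ω → (Fin p × Fin n → Matrix (Fin b) (Fin c) F) := fun _ => 0 with hB
  set R : Ω → (Fin X → Matrix (Fin a) (Fin b) F) := fun ω => (eP.symm ω.2).1 with hR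
  set S : Ω → (Fin X → Matrix (Fin b) (Fin c) F) := fun ω => (eP.symm ω.2).2 with hS
  have hmA : Measurable A :=
    (measurable_from_top
      (f := fun t : Bool =>
        if t then Apt else (0 : Fin m × Fin p → Matrix (Fin a) (Fin b) F))).comp
      measurable_fst
  have hmB : Measurable B := measurable_const
  have hmR : Measurable R :=
    (measurable_from_top (f := fun x : Fin K => (eP.symm x).1)).comp measurable_snd
  have hmS : Measurable S :=
    (measurable_from_top (f := fun x : Fin K => (eP.symm x).2)).comp measurable_snd
  have hmap : μ.map (fun ω => (R ω, S ω)) = (PMF.uniformOfFintype P).toMeasure := by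
    have hcomp : (fun ω : Ω => (R ω, S ω)) = (⇑eP.symm) ∘ Prod.snd := rfl
    rw [hcomp, ← Measure.map_map (measurable_from_top (f := ⇑eP.symm)) measurable_snd,
      hμ, Measure.map_snd_prod, measure_univ, one_smul, hμK,
      PMF.toMeasure_map _ _ (measurable_from_top (f := ⇑eP.symm)),
      aux_pmf_map_equiv eP.symm]
  have hfs : IndepFun Prod.fst Prod.snd μ := by
    rw [ProbabilityTheory.indepFun_iff_measure_inter_preimage_eq_mul]
    intro s t hs ht
    rw [← Set.prod_eq, hμ, Measure.prod_prod, ← Set.prod_univ, ← Set.univ_prod,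
      Measure.prod_prod, Measure.prod_prod, measure_univ, measure_univ,
      mul_one, one_mul]
  have hindAB : IndepFun (fun ω => (A ω, B ω)) (fun ω => (R ω, S ω)) μ := by
    exact hfs.comp
      (φ := fun t : Bool =>
        ((if t then Apt else 0 : Fin m × Fin p → Matrix (Fin a) (Fin b) F),
          (0 : Fin p × Fin n → Matrix (Fin b) (Fin c) F)))
      (ψ := fun x : Fin K => eP.symm x)
      measurable_from_top measurable_from_top
  have hInd := hsec Ω mΩ μ hμprob A B R S hmA hmB hmR hmS hmap hindAB 𝒳 h𝒳X
  -- the linear functional of the colluding shares reveals the data bit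
  have hT : ∀ ω : Ω,
      (∑ j : {x // x ∈ 𝒳}, w j.1 * (encode Fmat (A ω) (R ω) j.1) a0 b0)
        = if ω.1 then (1:F) else 0 := by
    intro ω
    have hstep1 : (∑ j : {x // x ∈ 𝒳}, w j.1 * (encode Fmat (A ω) (R ω) j.1) a0 b0)
        = ∑ ℓ, w ℓ * (encode Fmat (A ω) (R ω) ℓ) a0 b0 := by
      rw [Finset.sum_coe_sort 𝒳 (fun ℓ => w ℓ * (encode Fmat (A ω) (R ω) ℓ) a0 b0)]
      exact Finset.sum_subset (Finset.subset_univ _)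
        (fun ℓ _ hℓ => by rw [hw0 ℓ hℓ, zero_mul])
    rw [hstep1]
    have hent : ∀ ℓ, (encode Fmat (A ω) (R ω) ℓ) a0 b0
        = (∑ ij, Fmat (Sum.inl ij) ℓ * (A ω ij a0 b0))
          + ∑ k, Fmat (Sum.inr k) ℓ * (R ω k a0 b0) := by
      intro ℓ
      show ((∑ ij, Fmat (Sum.inl ij) ℓ • A ω ij)
        + ∑ k, Fmat (Sum.inr k) ℓ • R ω k) a0 b0 = _
      simp only [Matrix.add_apply, Matrix.sum_apply, Matrix.smul_apply, smul_eq_mul]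
    simp only [hent, mul_add, Finset.sum_add_distrib, Finset.mul_sum]
    have hterm2 : ∑ ℓ, ∑ k, w ℓ * (Fmat (Sum.inr k) ℓ * (R ω k a0 b0)) = 0 := by
      rw [Finset.sum_comm]
      refine Finset.sum_eq_zero fun k _ => ?_
      have h2 : ∑ ℓ, w ℓ * (Fmat (Sum.inr k) ℓ * (R ω k a0 b0))
          = (∑ ℓ, w ℓ * Fmat (Sum.inr k) ℓ) * (R ω k a0 b0) := by
        rw [Finset.sum_mul]
        exact Finset.sum_congr rfl fun ℓ _ => by ring
      rw [h2]
      have h3 : ∑ ℓ, w ℓ * Fmat (Sum.inr k) ℓ = 0 := by simpa using hwg k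
      rw [h3, zero_mul]
    rw [hterm2, add_zero, Finset.sum_comm]
    have hco : ∀ ij : Fin m × Fin p, ∑ ℓ, w ℓ * (Fmat (Sum.inl ij) ℓ * (A ω ij a0 b0))
        = (∑ ℓ, w ℓ * Fmat (Sum.inl ij) ℓ) * (A ω ij a0 b0) := by
      intro ij
      rw [Finset.sum_mul]
      exact Finset.sum_congr rfl fun ℓ _ => by ring
    rw [Finset.sum_congr rfl fun ij _ => hco ij]
    by_cases hω : ω.1
    · have hAω : A ω = Apt := by rw [hA]; simp [hω]
      have hent2 : ∀ ij : Fin m × Fin p, Apt ij a0 b0 = if ij = ij0 then (1:F) else 0 := by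
        intro ij
        by_cases hij : ij = ij0
        · simp [hApt, hij, hEA, Matrix.single_apply_same]
        · simp [hApt, hij]
      simp only [hAω, hent2, mul_ite, mul_one, mul_zero]
      rw [Finset.sum_ite_eq' Finset.univ ij0 (fun ij => ∑ ℓ, w ℓ * Fmat (Sum.inl ij) ℓ)]
      rw [if_pos (Finset.mem_univ _), if_pos hω]
      exact hwv
    · have hAω : A ω = 0 := by rw [hA]; simp [hω]
      simp [hAω, hω]
  -- the two events
  set SetA : Set ((Fin m × Fin p → Matrix (Fin a) (Fin b) F)
      × (Fin p × Fin n → Matrix (Fin b) (Fin c) F)) :=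
    {x | x.1 ij0 a0 b0 = 1} with hSetA
  set SetT : Set ({x // x ∈ 𝒳}
      → Matrix (Fin a) (Fin b) F × Matrix (Fin b) (Fin c) F) :=
    {s | ∑ j : {x // x ∈ 𝒳}, w j.1 * (s j).1 a0 b0 = 1} with hSetT
  have hmSetA : MeasurableSet SetA := (Set.to_countable _).measurableSet
  have hmSetT : MeasurableSet SetT := (Set.to_countable _).measurableSet
  have hpre1 : (fun ω : Ω => (A ω, B ω)) ⁻¹' SetA = Prod.fst ⁻¹' {true} := by
    ext ω
    simp only [Set.mem_preimage, hSetA, Set.mem_setOf_eq, Set.mem_singleton_iff]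
    by_cases hω : ω.1
    · have hAω : A ω = Apt := by rw [hA]; simp [hω]
      have h1 : Apt ij0 a0 b0 = 1 := by
        simp [hApt, hEA, Matrix.single_apply_same]
      rw [hAω, h1]
      simp [hω]
    · have hAω : A ω = 0 := by rw [hA]; simp [hω]
      rw [hAω]
      simp [hω]
  have hpre2 : (fun ω : Ω => fun j : {x // x ∈ 𝒳} =>
      (encode Fmat (A ω) (R ω) j, encode Gmat (B ω) (S ω) j)) ⁻¹' SetT
      = Prod.fst ⁻¹' {true} := by
    ext ω
    simp only [Set.mem_preimage, hSetT, Set.mem_setOf_eq, Set.mem_singleton_iff]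
    rw [hT ω]
    by_cases hω : ω.1 <;> simp [hω]
  have hhalf : μ (Prod.fst ⁻¹' {true} : Set Ω) = 2⁻¹ := by
    rw [hμ, ← Set.prod_univ, Measure.prod_prod, measure_univ, mul_one, hμB,
      PMF.toMeasure_apply_singleton _ _ (measurableSet_singleton true),
      PMF.uniformOfFintype_apply]
    simp
  have hmul := hInd.measure_inter_preimage_eq_mul SetA SetT hmSetA hmSetT
  rw [hpre1, hpre2, Set.inter_self, hhalf] at hmul
  -- hmul : 2⁻¹ = 2⁻¹ * 2⁻¹, a contradiction
  have h2 : (2:ENNReal) ≠ 0 := two_ne_zero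
  have htop : (2:ENNReal) ≠ ⊤ := ENNReal.ofNat_ne_top
  have hcalc := congrArg (fun x => (2:ENNReal) * x) hmul
  simp only [← mul_assoc, ENNReal.mul_inv_cancel h2 htop, one_mul] at hcalc
  -- hcalc : 1 = 2⁻¹
  rw [eq_comm, ENNReal.inv_eq_one] at hcalc
  exact (by norm_num : (2:ENNReal) ≠ 1) hcalc
end

section
/- Lower bound on recovery threshold: for a decodable, X-secure linear SDMM scheme with codes C_A and C_B of length N and dimensions mp+X and np+X, the recovery threshold R = N − D + 1, where D is the minimum distance of C_A ⋆ C_B, satisfies R ≥ min{N, (m+n)p + 2X − 1}. -/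
set_option linter.unusedSectionVars false
set_option maxHeartbeats 1000000

section SDMMAux
open Submodule Module

universe u v

variable {F : Type v} [Field F] [DecidableEq F]

section aux
variable {ι : Type u} [Fintype ι] [DecidableEq ι]

def wt2 (v : ι → F) : ℕ := (Finset.univ.filter fun i => v i ≠ 0).card

def starSet2 (C D : Submodule F (ι → F)) : Set (ι → F) :=
  {v | ∃ c ∈ C, ∃ d ∈ D, v = fun i => c i * d i}

def starProd2 (C D : Submodule F (ι → F)) : Submodule F (ι → F) :=
  Submodule.span F (starSet2 C D)

lemma starProd2_mono {A A' B B' : Submodule F (ι → F)} (hA : A ≤ A') (hB : B ≤ B') :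
    starProd2 A B ≤ starProd2 A' B' := by
  apply Submodule.span_mono
  rintro v ⟨c, hc, d, hd, rfl⟩
  exact ⟨c, hA hc, d, hB hd, rfl⟩

lemma star_mem {A B : Submodule F (ι → F)} {a b : ι → F} (ha : a ∈ A) (hb : b ∈ B) :
    (fun i => a i * b i) ∈ starProd2 A B :=
  Submodule.subset_span ⟨a, ha, b, hb, rfl⟩

def sIn (S : Finset ι) : Submodule F (ι → F) where
  carrier := {v | ∀ i ∉ S, v i = 0}
  add_mem' := by intro a b ha hb i hi; simp [ha i hi, hb i hi]
  zero_mem' := by intro i hi; rfl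
  smul_mem' := by intro c a ha i hi; simp [ha i hi]

lemma mem_sIn {S : Finset ι} {v : ι → F} : v ∈ sIn S ↔ ∀ i ∉ S, v i = 0 := Iff.rfl

noncomputable def resL (S : Finset ι) : (ι → F) →ₗ[F] (S → F) :=
  LinearMap.funLeft F F Subtype.val

@[simp] lemma resL_apply (S : Finset ι) (v : ι → F) (i : S) : resL S v i = v i := rfl

lemma sIn_equiv (S : Finset ι) : Nonempty ((sIn S : Submodule F (ι → F)) ≃ₗ[F] (S → F)) := by
  refine ⟨LinearEquiv.ofBijective ((resL S).comp (sIn S).subtype) ⟨?_, ?_⟩⟩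
  · intro x y hxy
    ext i
    by_cases hi : i ∈ S
    · exact congrFun hxy ⟨i, hi⟩
    · rw [x.2 i hi, y.2 i hi]
  · intro f
    refine ⟨⟨fun i => if h : i ∈ S then f ⟨i, h⟩ else 0, fun i hi => dif_neg hi⟩, ?_⟩
    ext i
    simp [resL]

lemma finrank_sIn (S : Finset ι) : finrank F (sIn S : Submodule F (ι → F)) = S.card := by
  obtain ⟨e⟩ := sIn_equiv (F := F) S
  rw [LinearEquiv.finrank_eq e, Module.finrank_fintype_fun_eq_card, Fintype.card_coe]

lemma sIn_inf_compl (S : Finset ι) : (sIn S ⊓ sIn Sᶜ : Submodule F (ι → F)) = ⊥ := by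
  rw [eq_bot_iff]
  rintro v ⟨h1, h2⟩
  have : v = 0 := by
    ext i
    by_cases hi : i ∈ S
    · exact h2 i (by simp [hi])
    · exact h1 i hi
  simp [this]

lemma resL_eq_zero {S : Finset ι} {v : ι → F} (hv : v ∈ sIn (F := F) S)
    (h : resL S v = 0) : v = 0 := by
  ext i
  by_cases hi : i ∈ S
  · exact congrFun h ⟨i, hi⟩
  · exact hv i hi

lemma wt2_resL {S : Finset ι} {v : ι → F} (hv : v ∈ sIn (F := F) S) :
    wt2 (resL S v) = wt2 v := by
  classical
  unfold wt2
  apply Finset.card_bij (fun (i : S) _ => (i : ι))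
  · intro a ha
    simp only [Finset.mem_filter, Finset.mem_univ, true_and] at ha ⊢
    exact ha
  · intro a _ b _ h
    exact Subtype.ext h
  · intro b hb
    simp only [Finset.mem_filter, Finset.mem_univ, true_and] at hb
    have hbS : b ∈ S := by
      by_contra hc
      exact hb (hv b hc)
    exact ⟨⟨b, hbS⟩, Finset.mem_filter.2 ⟨Finset.mem_univ _, hb⟩, rfl⟩

lemma finrank_le_map_add (C : Submodule F (ι → F)) (S : Finset ι) :
    finrank F C ≤ finrank F (C.map (resL (F := F) S))
      + finrank F (C ⊓ sIn Sᶜ : Submodule F (ι → F)) := by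
  set f := (resL (F := F) S).comp C.subtype with hf
  have hrn := LinearMap.finrank_range_add_finrank_ker f
  have hrange : LinearMap.range f = C.map (resL (F := F) S) := by
    rw [hf, LinearMap.range_comp, Submodule.range_subtype]
  have hker : finrank F (LinearMap.ker f) ≤ finrank F (C ⊓ sIn Sᶜ : Submodule F (ι → F)) := by
    rw [← Submodule.finrank_map_subtype_eq C (LinearMap.ker f)]
    apply Submodule.finrank_mono
    rintro x ⟨⟨y, hyC⟩, hyk, rfl⟩
    refine ⟨hyC, fun i hi => ?_⟩
    simp only [Finset.mem_compl, not_not] at hi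
    have : resL (F := F) S y = 0 := hyk
    exact congrFun this ⟨i, hi⟩
  rw [hrange] at hrn
  omega

lemma map_starProd (A B : Submodule F (ι → F)) (S : Finset ι) :
    (starProd2 A B).map (resL (F := F) S)
      = starProd2 (A.map (resL (F := F) S)) (B.map (resL (F := F) S)) := by
  rw [starProd2, Submodule.map_span, starProd2]
  congr 1
  ext w
  constructor
  · rintro ⟨v, ⟨c, hc, d, hd, rfl⟩, rfl⟩
    exact ⟨resL S c, Submodule.mem_map_of_mem hc, resL S d, Submodule.mem_map_of_mem hd, rfl⟩
  · rintro ⟨c', ⟨c, hc, rfl⟩, d', ⟨d, hd, rfl⟩, rfl⟩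
    exact ⟨fun i => c i * d i, ⟨c, hc, d, hd, rfl⟩, rfl⟩

lemma finrank_pos_of_ne_bot {C : Submodule F (ι → F)} (h : C ≠ ⊥) : 1 ≤ finrank F C := by
  rw [Nat.one_le_iff_ne_zero]
  intro h0
  exact h (Submodule.finrank_eq_zero.1 h0)

lemma finrank_inf_bot {C D : Submodule F (ι → F)} (h : C ⊓ D = ⊥) :
    finrank F (C ⊓ D : Submodule F (ι → F)) = 0 := by
  rw [h]; exact finrank_bot F _

/-- Singleton bound -/
lemma exists_low_wt (C : Submodule F (ι → F)) (hC : C ≠ ⊥) :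
    ∃ c ∈ C, c ≠ 0 ∧ wt2 c + finrank F C ≤ Fintype.card ι + 1 := by
  classical
  set k := finrank F C with hk
  set n := Fintype.card ι with hn
  have hk1 : 1 ≤ k := finrank_pos_of_ne_bot hC
  have hkn : k ≤ n := by
    have := Submodule.finrank_le C
    rwa [Module.finrank_fintype_fun_eq_card] at this
  obtain ⟨S, -, hScard⟩ := Finset.exists_subset_card_eq (s := (Finset.univ : Finset ι)) (n := n + 1 - k)
    (by rw [Finset.card_univ]; omega)
  have hsum := Submodule.finrank_sup_add_finrank_inf_eq C (sIn (F := F) S)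
  have hsup : finrank F (C ⊔ sIn S : Submodule F (ι → F)) ≤ n := by
    have := Submodule.finrank_le (C ⊔ sIn (F := F) S)
    rwa [Module.finrank_fintype_fun_eq_card] at this
  rw [finrank_sIn, hScard] at hsum
  have hinf : 1 ≤ finrank F (C ⊓ sIn S : Submodule F (ι → F)) := by omega
  have hne : (C ⊓ sIn (F := F) S) ≠ ⊥ := by
    intro hb
    rw [hb, finrank_bot] at hinf
    omega
  obtain ⟨c, hc, hc0⟩ := Submodule.ne_bot_iff _ |>.1 hne
  refine ⟨c, hc.1, hc0, ?_⟩
  have hwt : wt2 c ≤ S.card := by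
    apply Finset.card_le_card
    intro i hi
    simp only [Finset.mem_filter, Finset.mem_univ, true_and] at hi
    by_contra hiS
    exact hi (hc.2 i hiS)
  omega

end aux
-- continuation: assume d.lean contents prepended
section key
variable {ι : Type u} [Fintype ι] [DecidableEq ι]

/-- The statement we prove by induction on the length. -/
def Q (F : Type v) [Field F] [DecidableEq F] (n : ℕ) : Prop :=
  ∀ (κ : Type u) [Fintype κ] [DecidableEq κ], Fintype.card κ = n →
    ∀ (A B : Submodule F (κ → F)), starProd2 A B ≠ ⊥ →
      ∃ v ∈ starProd2 A B, v ≠ 0 ∧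
        (wt2 v ≤ 1 ∨ wt2 v + finrank F A + finrank F B ≤ n + 2)

lemma red {n : ℕ} (hn : Fintype.card ι = n)
    (IH : ∀ m, m < n → Q.{u, v} F m)
    (S : Finset ι) (hS : S.card < n) (A B : Submodule F (ι → F))
    (hne : starProd2 A B ≠ ⊥) (hsupp : starProd2 A B ≤ sIn S) :
    ∃ v ∈ starProd2 A B, v ≠ 0 ∧
      (wt2 v ≤ 1 ∨ wt2 v + finrank F (A.map (resL (F := F) S))
        + finrank F (B.map (resL (F := F) S)) ≤ S.card + 2) := by
  have hmapne : starProd2 (A.map (resL (F := F) S)) (B.map (resL (F := F) S)) ≠ ⊥ := by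
    rw [← map_starProd]
    obtain ⟨v₀, hv₀, hv₀0⟩ := (Submodule.ne_bot_iff _).1 hne
    refine (Submodule.ne_bot_iff _).2 ⟨resL S v₀, Submodule.mem_map_of_mem hv₀, fun hz => ?_⟩
    exact hv₀0 (resL_eq_zero (hsupp hv₀) hz)
  obtain ⟨w, hw, hw0, hwb⟩ := IH S.card hS (↥S) (Fintype.card_coe S)
    (A.map (resL (F := F) S)) (B.map (resL (F := F) S)) hmapne
  rw [← map_starProd] at hw
  obtain ⟨v, hv, rfl⟩ := hw
  have hvS : v ∈ sIn (F := F) S := hsupp hv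
  have hv0 : v ≠ 0 := by rintro rfl; exact hw0 (map_zero _)
  rw [wt2_resL hvS] at hwb
  exact ⟨v, hv, hv0, hwb⟩

lemma key (n : ℕ) : Q.{u, v} F n := by
  induction n using Nat.strong_induction_on with
  | _ n IH =>
  intro ι _ _ hn A B hne
  classical
  -- basic facts
  have hbotA : A ≠ ⊥ := by
    rintro rfl
    apply hne
    rw [eq_bot_iff, starProd2]
    apply Submodule.span_le.2
    rintro v ⟨c, hc, d, hd, rfl⟩
    have hc0 : c = 0 := hc
    simp only [SetLike.mem_coe, Submodule.mem_bot]
    funext i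
    simp [hc0]
  have hbotB : B ≠ ⊥ := by
    rintro rfl
    apply hne
    rw [eq_bot_iff, starProd2]
    apply Submodule.span_le.2
    rintro v ⟨c, hc, d, hd, rfl⟩
    have hd0 : d = 0 := hd
    simp only [SetLike.mem_coe, Submodule.mem_bot]
    funext i
    simp [hd0]
  have hkA : 1 ≤ finrank F A := finrank_pos_of_ne_bot hbotA
  have hkB : 1 ≤ finrank F B := finrank_pos_of_ne_bot hbotB
  have hkAn : finrank F A ≤ n := by
    have := Submodule.finrank_le A
    rwa [Module.finrank_fintype_fun_eq_card, hn] at this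
  by_cases hFS : ∀ i : ι, ∃ a ∈ A, a i ≠ 0
  · -- A has full support
    by_cases hkA2 : 2 ≤ finrank F A
    · -- main case
      obtain ⟨a, haA, ha0, hawt⟩ := exists_low_wt A hbotA
      rw [hn] at hawt
      set T : Finset ι := Finset.univ.filter (fun i => a i ≠ 0) with hT
      have hTwt : T.card = wt2 a := rfl
      have hTpos : 1 ≤ T.card := by
        obtain ⟨i, hi⟩ := Function.ne_iff.1 ha0
        simp only [Pi.zero_apply] at hi
        exact Finset.card_pos.2 ⟨i, by simp [hT, hi]⟩
      have hTn : T.card ≤ n := by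
        rw [← hn, ← Finset.card_univ]; exact Finset.card_le_card (Finset.subset_univ T)
      have haT : a ∈ sIn (F := F) T := by
        intro i hi
        simp only [hT, Finset.mem_filter, Finset.mem_univ, true_and, not_not] at hi
        exact hi
      set α := finrank F (A ⊓ sIn T : Submodule F (ι → F)) with hα
      have hα1 : 1 ≤ α := finrank_pos_of_ne_bot
        ((Submodule.ne_bot_iff _).2 ⟨a, ⟨haA, haT⟩, ha0⟩)
      have hαt : α ≤ T.card := by
        rw [hα, ← finrank_sIn (F := F) T]
        exact Submodule.finrank_mono inf_le_right
      set r := finrank F (B.map (resL (F := F) T)) with hr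
      set β := finrank F (B ⊓ sIn Tᶜ : Submodule F (ι → F)) with hβ
      have hkBrβ : finrank F B ≤ r + β := finrank_le_map_add B T
      have hTc : Tᶜ.card + T.card = n := by
        rw [Finset.card_compl, ← hn]
        omega
      -- branch 1
      have branch1 : 1 ≤ r → ∃ v ∈ starProd2 A B, v ≠ 0 ∧
          (wt2 v ≤ 1 ∨ wt2 v + finrank F ((A ⊓ sIn T).map (resL (F := F) T)) + r
            ≤ T.card + 2) := by
        intro hr1
        have hmapne : B.map (resL (F := F) T) ≠ ⊥ := by
          intro hb
          rw [hr, hb, finrank_bot] at hr1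
          omega
        obtain ⟨w, ⟨b, hbB, rfl⟩, hw0⟩ := (Submodule.ne_bot_iff _).1 hmapne
        obtain ⟨i, hi⟩ := Function.ne_iff.1 hw0
        simp only [Pi.zero_apply] at hi
        have hai : a (i : ι) ≠ 0 := by
          have hiT := i.2
          simp only [hT, Finset.mem_filter, Finset.mem_univ, true_and] at hiT
          exact hiT
        have hsupp1 : starProd2 (A ⊓ sIn T) B ≤ sIn (F := F) T := by
          rw [starProd2]
          apply Submodule.span_le.2
          rintro v ⟨c, hc, d, hd, rfl⟩
          intro j hj
          show c j * d j = 0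
          rw [hc.2 j hj, zero_mul]
        have hne1 : starProd2 (A ⊓ sIn T) B ≠ ⊥ := by
          refine (Submodule.ne_bot_iff _).2 ⟨fun j => a j * b j,
            star_mem ⟨haA, haT⟩ hbB, fun hz => ?_⟩
          have := congrFun hz (i : ι)
          simp only [Pi.zero_apply] at this
          exact hi (by simpa [mul_eq_zero, hai] using this)
        obtain ⟨v, hv, hv0, hvb⟩ := red hn IH T (by omega) (A ⊓ sIn T) B hne1 hsupp1
        exact ⟨v, starProd2_mono inf_le_left le_rfl hv, hv0, hvb⟩
      have hmA1 : 1 ≤ r → α ≤ finrank F ((A ⊓ sIn T).map (resL (F := F) T)) := by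
        intro _
        have h1 := finrank_le_map_add (A ⊓ sIn (F := F) T) T
        have h2 : ((A ⊓ sIn T) ⊓ sIn Tᶜ : Submodule F (ι → F)) = ⊥ := by
          rw [eq_bot_iff, ← sIn_inf_compl (F := F) T]
          exact inf_le_inf_right _ inf_le_right
        rw [finrank_inf_bot h2] at h1
        omega
      -- branch 2
      have branch2 : 1 ≤ β → ∃ v ∈ starProd2 A B, v ≠ 0 ∧
          (wt2 v ≤ 1 ∨ wt2 v + finrank F (A.map (resL (F := F) Tᶜ))
            + finrank F ((B ⊓ sIn Tᶜ).map (resL (F := F) Tᶜ)) ≤ Tᶜ.card + 2) := by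
        intro hβ1
        have hmapne : (B ⊓ sIn (F := F) Tᶜ) ≠ ⊥ := by
          intro hb
          rw [hβ, hb, finrank_bot] at hβ1
          omega
        obtain ⟨b₀, hb₀, hb₀0⟩ := (Submodule.ne_bot_iff _).1 hmapne
        obtain ⟨i, hi⟩ := Function.ne_iff.1 hb₀0
        simp only [Pi.zero_apply] at hi
        obtain ⟨a', ha'A, ha'i⟩ := hFS i
        have hsupp2 : starProd2 A (B ⊓ sIn Tᶜ) ≤ sIn (F := F) Tᶜ := by
          rw [starProd2]
          apply Submodule.span_le.2
          rintro v ⟨c, hc, d, hd, rfl⟩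
          intro j hj
          show c j * d j = 0
          rw [hd.2 j hj, mul_zero]
        have hne2 : starProd2 A (B ⊓ sIn Tᶜ) ≠ ⊥ := by
          refine (Submodule.ne_bot_iff _).2 ⟨fun j => a' j * b₀ j,
            star_mem ha'A hb₀, fun hz => ?_⟩
          have := congrFun hz i
          simp only [Pi.zero_apply] at this
          exact hi (by simpa [mul_eq_zero, ha'i] using this)
        obtain ⟨v, hv, hv0, hvb⟩ := red hn IH Tᶜ (by omega) A (B ⊓ sIn Tᶜ) hne2 hsupp2
        exact ⟨v, starProd2_mono le_rfl inf_le_left hv, hv0, hvb⟩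
      have hmA2 : finrank F A ≤ finrank F (A.map (resL (F := F) Tᶜ)) + α := by
        have h1 := finrank_le_map_add A Tᶜ
        rwa [compl_compl] at h1
      have hmB2 : β ≤ finrank F ((B ⊓ sIn Tᶜ).map (resL (F := F) Tᶜ)) := by
        have h1 := finrank_le_map_add (B ⊓ sIn (F := F) Tᶜ) Tᶜ
        have h2 : ((B ⊓ sIn Tᶜ) ⊓ sIn Tᶜᶜ : Submodule F (ι → F)) = ⊥ := by
          rw [eq_bot_iff, ← sIn_inf_compl (F := F) Tᶜ]
          exact inf_le_inf_right _ inf_le_right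
        rw [finrank_inf_bot h2] at h1
        exact h1
      -- combine
      by_cases hβ0 : β = 0
      · obtain ⟨v, hv, hv0, hvb⟩ := branch1 (by omega)
        have := hmA1 (by omega)
        exact ⟨v, hv, hv0, by omega⟩
      · by_cases hr0 : r = 0
        · obtain ⟨v, hv, hv0, hvb⟩ := branch2 (by omega)
          exact ⟨v, hv, hv0, by omega⟩
        · obtain ⟨v1, hv1, hv10, hvb1⟩ := branch1 (by omega)
          obtain ⟨v2, hv2, hv20, hvb2⟩ := branch2 (by omega)
          have h1 := hmA1 (by omega)
          by_cases hgood : wt2 v1 ≤ 1 ∨ wt2 v1 + finrank F A + finrank F B ≤ n + 2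
          · exact ⟨v1, hv1, hv10, hgood⟩
          · push_neg at hgood
            exact ⟨v2, hv2, hv20, by omega⟩
    · -- finrank A = 1
      have hkA1 : finrank F A = 1 := by omega
      obtain ⟨a, haA, ha0⟩ := (Submodule.ne_bot_iff _).1 hbotA
      have hAspan : (F ∙ a) = A := by
        apply Submodule.eq_of_le_of_finrank_le
          ((Submodule.span_singleton_le_iff_mem a A).2 haA)
        rw [hkA1, finrank_span_singleton ha0]
      have hafull : ∀ i, a i ≠ 0 := by
        intro i
        obtain ⟨a', ha'A, ha'i⟩ := hFS i
        rw [← hAspan] at ha'A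
        obtain ⟨c, rfl⟩ := Submodule.mem_span_singleton.1 ha'A
        intro hai
        apply ha'i
        simp [hai]
      obtain ⟨b, hbB, hb0, hbwt⟩ := exists_low_wt B hbotB
      rw [hn] at hbwt
      refine ⟨fun i => a i * b i, star_mem haA hbB, ?_, ?_⟩
      · intro hz
        obtain ⟨i, hi⟩ := Function.ne_iff.1 hb0
        simp only [Pi.zero_apply] at hi
        have := congrFun hz i
        simp only [Pi.zero_apply] at this
        exact hi (by simpa [mul_eq_zero, hafull i] using this)
      · right
        have : wt2 (F := F) (fun i => a i * b i) = wt2 b := by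
          unfold wt2
          congr 1
          ext i
          simp [mul_eq_zero, hafull i]
        omega
  · -- A not full support
    push_neg at hFS
    obtain ⟨i₀, hi₀⟩ := hFS
    set S : Finset ι := ({i₀} : Finset ι)ᶜ with hS
    have hScard : S.card + 1 = n := by
      rw [hS, Finset.card_compl, Finset.card_singleton, ← hn]
      have : 1 ≤ Fintype.card ι := by omega
      omega
    have hsupp : starProd2 A B ≤ sIn (F := F) S := by
      rw [starProd2]
      apply Submodule.span_le.2
      rintro v ⟨c, hc, d, hd, rfl⟩
      intro j hj
      simp only [hS, Finset.mem_compl, not_not, Finset.mem_singleton] at hj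
      subst hj
      show c j * d j = 0
      rw [hi₀ c hc, zero_mul]
    obtain ⟨v, hv, hv0, hvb⟩ := red hn IH S (by omega) A B hne hsupp
    have hmA : finrank F A ≤ finrank F (A.map (resL (F := F) S)) := by
      have h1 := finrank_le_map_add A S
      have h2 : (A ⊓ sIn Sᶜ : Submodule F (ι → F)) = ⊥ := by
        rw [eq_bot_iff]
        rintro x ⟨hxA, hxS⟩
        have hx : x = 0 := by
          ext j
          by_cases hj : j = i₀
          · subst hj; exact hi₀ x hxA
          · apply hxS
            simp [hS, hj]
        simp [hx]
      rw [finrank_inf_bot h2] at h1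
      exact h1
    have hmB : finrank F B ≤ finrank F (B.map (resL (F := F) S)) + 1 := by
      have h1 := finrank_le_map_add B S
      have h2 : finrank F (B ⊓ sIn Sᶜ : Submodule F (ι → F)) ≤ 1 := by
        calc finrank F (B ⊓ sIn Sᶜ : Submodule F (ι → F))
            ≤ finrank F (sIn (F := F) Sᶜ) := Submodule.finrank_mono inf_le_right
          _ = Sᶜ.card := finrank_sIn _
          _ = 1 := by rw [hS, compl_compl, Finset.card_singleton]
      omega
    exact ⟨v, hv, hv0, by omega⟩

end key
end SDMMAux

/-- Lower bound on the recovery threshold of a linear SDMM scheme: if `C_A` and `C_B`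
are codes of length `N` with dimensions `mp + X` and `np + X`, and `D` is the minimum
distance of `C_A ⋆ C_B`, then `R = N - D + 1 ≥ min {N, (m+n)p + 2X - 1}`. -/
theorem recovery_threshold_bound {F : Type*} [Field F] [Fintype F] [DecidableEq F]
    {N m n p X : ℕ} (CA CB : Submodule F (Fin N → F))
    (hCA : Module.finrank F CA = m * p + X) (hCB : Module.finrank F CB = n * p + X)
    (D : ℕ) (hD : IsMinDist (starProd CA CB) D) :
    min N ((m + n) * p + 2 * X - 1) ≤ N - D + 1 := by
  classical
  have hstar : starProd CA CB = starProd2 CA CB := rfl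
  have hne : starProd2 CA CB ≠ ⊥ := by
    obtain ⟨⟨v, hv, hv0, -⟩, -⟩ := hD
    rw [hstar] at hv
    exact (Submodule.ne_bot_iff _).2 ⟨v, hv, hv0⟩
  obtain ⟨w, hw, hw0, hwb⟩ := key (F := F) N (Fin N) (Fintype.card_fin N) CA CB hne
  rw [← hstar] at hw
  have hDw : D ≤ wt w := hD.2 w hw hw0
  have hwt : wt w = wt2 w := rfl
  have hDN : D ≤ N := by
    obtain ⟨⟨v₀, -, -, hv₀wt⟩, -⟩ := hD
    have : wt v₀ ≤ N := by
      have := Finset.card_filter_le (Finset.univ : Finset (Fin N)) (fun i => v₀ i ≠ 0)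
      rwa [Finset.card_univ, Fintype.card_fin] at this
    omega
  rw [hCA, hCB] at hwb
  have h2 : (m + n) * p + 2 * X - 1 = (m * p + X) + (n * p + X) - 1 := by
    have : (m + n) * p + 2 * X = (m * p + X) + (n * p + X) := by ring
    omega
  rw [h2]
  set u1 := m * p + X with hu1
  set u2 := n * p + X with hu2
  clear_value u1 u2
  omega
end
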